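/- arXiv:1506.05451 — 17 statements merged into one kernel-verified Lean document; each statement's English description precedes it below -/
import Mathlib

section
/- If f is an unbounded modulus function and A ⊆ ℕ has f-density zero, then the complement ℕ \ A has f-density one. -/
open Filter Finset Topology
open scoped Classical

def IsModulus (f : ℝ → ℝ) : Prop :=
  (∀ x, 0 ≤ x → 0 ≤ f x) ∧
  (∀ x, 0 ≤ x → (f x = 0 ↔ x = 0)) ∧
  (∀ x, 0 ≤ x → ∀ y, 0 ≤ y → f (x + y) ≤ f x + f y) ∧
  (∀ x y, 0 ≤ x → x ≤ y → f x ≤ f y) ∧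
  ContinuousWithinAt f (Set.Ici 0) 0

def IsUnboundedModulus (f : ℝ → ℝ) : Prop :=
  IsModulus f ∧ ∀ M : ℝ, ∃ x, 0 ≤ x ∧ M < f x

def MemLambda (l : ℕ → ℝ) : Prop :=
  l 1 = 1 ∧ Monotone l ∧ (∀ n, l (n + 1) ≤ l n + 1) ∧ (∀ n, 0 < l n) ∧
  Tendsto l atTop atTop

noncomputable def Iseg (l : ℕ → ℝ) (n : ℕ) : Finset ℕ :=
  (Finset.Icc 1 n).filter (fun t => (n : ℝ) - l n + 1 ≤ (t : ℝ))

def FLStatConv {X : Type*} [NormedAddCommGroup X] (f : ℝ → ℝ) (l : ℕ → ℝ)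
    (x : ℕ → X) (L : X) : Prop :=
  ∀ ξ : ℝ, 0 < ξ →
    Tendsto (fun n => f (((Iseg l n).filter (fun t => ξ ≤ ‖x t - L‖)).card) / f (l n))
      atTop (nhds 0)

def FLDensityZero (f : ℝ → ℝ) (l : ℕ → ℝ) (T : Set ℕ) : Prop :=
  Tendsto (fun n => f (((Iseg l n).filter (fun t => t ∈ T)).card) / f (l n))
    atTop (nhds 0)

def FStatConv {X : Type*} [NormedAddCommGroup X] (f : ℝ → ℝ)
    (x : ℕ → X) (L : X) : Prop :=
  ∀ ξ : ℝ, 0 < ξ →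
    Tendsto (fun u => f (((Finset.Icc 1 u).filter (fun t => ξ ≤ ‖x t - L‖)).card) / f (u : ℝ))
      atTop (nhds 0)

theorem stmt0 (f : ℝ → ℝ) (hf : IsUnboundedModulus f) (A : Set ℕ)
    (h : Tendsto (fun u => f (((Finset.Icc 1 u).filter (fun t => t ∈ A)).card) / f (u : ℝ))
      atTop (nhds 0)) :
    Tendsto (fun u => f (((Finset.Icc 1 u).filter (fun t => t ∈ Aᶜ)).card) / f (u : ℝ))
      atTop (nhds 1) := by
  obtain ⟨⟨hf0, hfz, hsub, hmono, _⟩, hub⟩ := hf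
  obtain ⟨x0, hx0, hx0pos⟩ := hub 0
  have hcard : ∀ u : ℕ, (((Finset.Icc 1 u).filter (fun t => t ∈ A)).card : ℝ)
      + (((Finset.Icc 1 u).filter (fun t => t ∈ Aᶜ)).card : ℝ) = u := by
    intro u
    have h1 : ((Finset.Icc 1 u).filter (fun t => t ∈ A)).card
        + ((Finset.Icc 1 u).filter (fun t => ¬ t ∈ A)).card = (Finset.Icc 1 u).card :=
      Finset.card_filter_add_card_filter_not (fun t => t ∈ A)
    have h2 : ((Finset.Icc 1 u).filter (fun t => ¬ t ∈ A))
        = ((Finset.Icc 1 u).filter (fun t => t ∈ Aᶜ)) := by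
      apply Finset.filter_congr; intro t _; simp
    rw [h2, Nat.card_Icc] at h1
    have : ((Finset.Icc 1 u).filter (fun t => t ∈ A)).card
        + ((Finset.Icc 1 u).filter (fun t => t ∈ Aᶜ)).card = u := by omega
    exact_mod_cast congrArg (Nat.cast : ℕ → ℝ) this
  have hlo : Tendsto (fun u : ℕ =>
      1 - f (((Finset.Icc 1 u).filter (fun t => t ∈ A)).card) / f (u : ℝ)) atTop (nhds 1) := by
    simpa using tendsto_const_nhds.sub h
  apply tendsto_of_tendsto_of_tendsto_of_le_of_le' hlo tendsto_const_nhds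
  · filter_upwards [eventually_ge_atTop ⌈x0⌉₊] with u hu
    have hux : x0 ≤ (u : ℝ) := le_trans (Nat.le_ceil x0) (Nat.cast_le.mpr hu)
    have hfu : 0 < f (u : ℝ) := lt_of_lt_of_le hx0pos (hmono _ _ hx0 hux)
    set a : ℝ := (((Finset.Icc 1 u).filter (fun t => t ∈ A)).card : ℝ)
    set b : ℝ := (((Finset.Icc 1 u).filter (fun t => t ∈ Aᶜ)).card : ℝ)
    have hab : a + b = u := hcard u
    have ha : (0:ℝ) ≤ a := Nat.cast_nonneg _
    have hb : (0:ℝ) ≤ b := Nat.cast_nonneg _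
    have hsum : f (u : ℝ) ≤ f a + f b := by
      rw [← hab]; exact hsub a ha b hb
    rw [le_div_iff₀ hfu, sub_mul, one_mul, div_mul_cancel₀ _ hfu.ne']
    linarith
  · filter_upwards [eventually_ge_atTop ⌈x0⌉₊] with u hu
    have hux : x0 ≤ (u : ℝ) := le_trans (Nat.le_ceil x0) (Nat.cast_le.mpr hu)
    have hfu : 0 < f (u : ℝ) := lt_of_lt_of_le hx0pos (hmono _ _ hx0 hux)
    set a : ℝ := (((Finset.Icc 1 u).filter (fun t => t ∈ A)).card : ℝ)
    set b : ℝ := (((Finset.Icc 1 u).filter (fun t => t ∈ Aᶜ)).card : ℝ)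
    have hab : a + b = u := hcard u
    have ha : (0:ℝ) ≤ a := Nat.cast_nonneg _
    have hb : (0:ℝ) ≤ b := Nat.cast_nonneg _
    have hbu : b ≤ (u : ℝ) := by linarith
    exact div_le_one_of_le₀ (hmono b (u : ℝ) hb hbu) hfu.le
end

section
/- Let f be an unbounded modulus such that there is c > 0 with f(xy) ≥ c·f(x)·f(y) for all x,y ≥ 0, and such that lim_{u→∞} f(u)/u > 0. Let λ = (λ_n) ∈ Λ and I_n = [n−λ_n+1, n]. If a real sequence (x_t) is strongly λ-summable to L (i.e. lim_n (1/λ_n) Σ_{t∈I_n} |x_t − L| = 0), then (x_t) is f_λ-statistically convergent to L, i.e. for every ξ > 0, lim_n f(|{t ∈ I_n : |x_t − L| ≥ ξ}|)/f(λ_n) = 0. -/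
open Filter Finset Topology
open scoped Classical

theorem stmt2 (f : ℝ → ℝ) (hf : IsUnboundedModulus f)
    (c : ℝ) (hc : 0 < c) (hmul : ∀ x, 0 ≤ x → ∀ y, 0 ≤ y → c * (f x * f y) ≤ f (x * y))
    (hlim : ∃ p : ℝ, 0 < p ∧ Tendsto (fun u : ℝ => f u / u) atTop (nhds p))
    (l : ℕ → ℝ) (hl : MemLambda l) (x : ℕ → ℝ) (L : ℝ)
    (hsum : Tendsto (fun n => (1 / l n) * ∑ t ∈ Iseg l n, |x t - L|) atTop (nhds 0)) :
    FLStatConv f l x L := by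
  obtain ⟨⟨hf0, hfz, _hadd, hmono, _hcont⟩, hunb⟩ := hf
  obtain ⟨_h1, _hlmono, _hstep, hlpos, _hltop⟩ := hl
  intro ξ hξ
  set K : ℕ → ℕ := fun n => ((Iseg l n).filter (fun t => ξ ≤ ‖x t - L‖)).card with hKdef
  have hSnn : ∀ n, 0 ≤ ∑ t ∈ Iseg l n, |x t - L| := fun n =>
    Finset.sum_nonneg fun t _ => abs_nonneg _
  have hcard : ∀ n, ξ * (K n : ℝ) ≤ ∑ t ∈ Iseg l n, |x t - L| := by
    intro n
    have h1 : (K n : ℝ) * ξ ≤ ∑ t ∈ (Iseg l n).filter (fun t => ξ ≤ ‖x t - L‖), |x t - L| := by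
      have := Finset.card_nsmul_le_sum ((Iseg l n).filter (fun t => ξ ≤ ‖x t - L‖))
        (fun t => |x t - L|) ξ (fun t ht => by
          have := (Finset.mem_filter.1 ht).2
          simpa [Real.norm_eq_abs] using this)
      rw [nsmul_eq_mul] at this
      exact this
    have h2 : ∑ t ∈ (Iseg l n).filter (fun t => ξ ≤ ‖x t - L‖), |x t - L|
        ≤ ∑ t ∈ Iseg l n, |x t - L| :=
      Finset.sum_le_sum_of_subset_of_nonneg (Finset.filter_subset _ _)
        (fun t _ _ => abs_nonneg _)
    linarith [mul_comm (K n : ℝ) ξ]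
  have h0 : ∀ n, 0 ≤ (K n : ℝ) / l n := fun n =>
    div_nonneg (Nat.cast_nonneg _) (hlpos n).le
  have hKl : Tendsto (fun n => (K n : ℝ) / l n) atTop (nhds 0) := by
    have hub : ∀ n, (K n : ℝ) / l n ≤ (1/ξ) * ((1 / l n) * ∑ t ∈ Iseg l n, |x t - L|) := by
      intro n
      have hln := hlpos n
      rw [div_le_iff₀ hln]
      have := hcard n
      rw [one_div, one_div, mul_comm]
      have heq : l n * (ξ⁻¹ * ((l n)⁻¹ * ∑ t ∈ Iseg l n, |x t - L|))
          = (∑ t ∈ Iseg l n, |x t - L|) / ξ := by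
        field_simp
      rw [heq, le_div_iff₀ hξ]
      linarith
    have hlim2 : Tendsto (fun n => (1/ξ) * ((1 / l n) * ∑ t ∈ Iseg l n, |x t - L|))
        atTop (nhds 0) := by simpa using hsum.const_mul (1/ξ)
    exact tendsto_of_tendsto_of_tendsto_of_le_of_le tendsto_const_nhds hlim2 h0 hub
  rw [Metric.tendsto_atTop]
  intro ε hε
  obtain ⟨A, hA0, hAf⟩ := hunb (1 / (c * ε))
  have hfA : 0 < f A := lt_of_le_of_lt (by positivity) hAf
  have hApos : 0 < A := by
    rcases hA0.lt_or_eq with h | h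
    · exact h
    · exfalso; rw [← h, (hfz 0 le_rfl).2 rfl] at hfA; exact lt_irrefl _ hfA
  obtain ⟨N, hN⟩ := (Metric.tendsto_atTop.1 hKl) (1/A) (by positivity)
  refine ⟨N, fun n hn => ?_⟩
  have hln := hlpos n
  have hfln : 0 < f (l n) := by
    rcases (hf0 (l n) hln.le).lt_or_eq with h | h
    · exact h
    · exfalso
      have := (hfz (l n) hln.le).1 h.symm
      exact hln.ne' this
  have hmain : c * f A * f (K n) ≤ f (l n) := by
    by_cases hK0 : K n = 0
    · rw [hKdef] at hK0
      simp only [hKdef, hK0, Nat.cast_zero, (hfz 0 le_rfl).2 rfl, mul_zero]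
      exact hfln.le
    · have hd := hN n hn
      rw [Real.dist_eq, sub_zero, abs_of_nonneg (h0 n)] at hd
      have hAK : A * (K n : ℝ) ≤ l n := by
        rw [div_lt_div_iff₀ hln hApos] at hd
        nlinarith
      have h1 := hmul A hA0 (K n : ℝ) (Nat.cast_nonneg _)
      have h2 := hmono (A * (K n : ℝ)) (l n) (by positivity) hAK
      linarith [mul_assoc c (f A) (f (K n : ℝ))]
  rw [Real.dist_eq, sub_zero,
    abs_of_nonneg (div_nonneg (hf0 _ (Nat.cast_nonneg _)) hfln.le)]
  have hstep : f (K n : ℝ) / f (l n) ≤ 1 / (c * f A) := by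
    rw [div_le_div_iff₀ hfln (by positivity)]
    nlinarith [hf0 (K n : ℝ) (Nat.cast_nonneg _)]
  have hfin : 1 / (c * f A) < ε := by
    rw [div_lt_iff₀ (by positivity)]
    rw [div_lt_iff₀ (by positivity)] at hAf
    nlinarith
  linarith
end

section
/- Let f be an unbounded modulus, λ ∈ Λ, and (x_t) a bounded real sequence that is f_λ-statistically convergent to L. Then (x_t) is strongly λ-summable to L, i.e. lim_n (1/λ_n) Σ_{t∈I_n} |x_t − L| = 0. -/
open Filter Finset Topology
open scoped Classical

lemma modulus_zero (f : ℝ → ℝ) (hm : IsModulus f) : f 0 = 0 :=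
  (hm.2.1 0 le_rfl).mpr rfl

lemma modulus_nsmul (f : ℝ → ℝ) (hm : IsModulus f) (y : ℝ) (hy : 0 ≤ y) :
    ∀ k : ℕ, f (k * y) ≤ k * f y := by
  intro k
  induction k with
  | zero => simp [modulus_zero f hm]
  | succ k ih =>
    push_cast
    have h1 : ((k : ℝ) + 1) * y = k * y + y := by ring
    rw [h1]
    calc f ((k : ℝ) * y + y) ≤ f ((k : ℝ) * y) + f y :=
          hm.2.2.1 _ (by positivity) _ hy
      _ ≤ k * f y + f y := by linarith
      _ = ((k : ℝ) + 1) * f y := by ring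

lemma density_zero (f : ℝ → ℝ) (hm : IsModulus f) (l : ℕ → ℝ) (hl : ∀ n, 0 < l n)
    (a : ℕ → ℕ)
    (h : Tendsto (fun n => f (a n) / f (l n)) atTop (nhds 0)) :
    Tendsto (fun n => (a n : ℝ) / l n) atTop (nhds 0) := by
  have hfpos : ∀ n, 0 < f (l n) := by
    intro n
    rcases (hm.1 (l n) (hl n).le).lt_or_eq with h' | h'
    · exact h'
    · exact absurd ((hm.2.1 (l n) (hl n).le).mp h'.symm) (hl n).ne'
  rw [Metric.tendsto_atTop] at h ⊢
  intro ε hε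
  set k : ℕ := ⌈1/ε⌉₊ with hkdef
  have hk1 : 0 < k := Nat.ceil_pos.mpr (by positivity)
  have hkR : (0:ℝ) < k := by exact_mod_cast hk1
  have hkε : 1 ≤ (k : ℝ) * ε := by
    have := Nat.le_ceil (1/ε)
    rw [div_le_iff₀ hε] at this
    linarith
  obtain ⟨N, hN⟩ := h (1/k) (one_div_pos.mpr hkR)
  refine ⟨N, fun n hn => ?_⟩
  rw [Real.dist_eq, sub_zero,
    abs_of_nonneg (div_nonneg (Nat.cast_nonneg _) (hl n).le)]
  rw [div_lt_iff₀ (hl n)]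
  by_contra hcon
  push_neg at hcon
  have hεl : 0 ≤ ε * l n := mul_nonneg hε.le (hl n).le
  have h1 : f (l n) ≤ f ((k : ℝ) * (ε * l n)) := by
    apply hm.2.2.2.1 _ _ (hl n).le
    nlinarith [hl n]
  have h2 : f ((k : ℝ) * (ε * l n)) ≤ k * f (ε * l n) := modulus_nsmul f hm _ hεl k
  have h3 : f (ε * l n) ≤ f (a n) := hm.2.2.2.1 _ _ hεl hcon
  have hratio := hN n hn
  rw [Real.dist_eq, sub_zero,
    abs_of_nonneg (div_nonneg (hm.1 _ (Nat.cast_nonneg _)) (hfpos n).le)] at hratio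
  rw [div_lt_div_iff₀ (hfpos n) hkR] at hratio
  nlinarith [hm.1 (a n) (Nat.cast_nonneg (a n))]

lemma card_Iseg_le (l : ℕ → ℝ) (hl : ∀ n, 0 < l n) (n : ℕ) :
    ((Iseg l n).card : ℝ) ≤ l n := by
  by_cases h : (Iseg l n).Nonempty
  · obtain ⟨m, hmmem0, hmin⟩ : ∃ m, m ∈ Iseg l n ∧ ∀ t ∈ Iseg l n, m ≤ t :=
      ⟨(Iseg l n).min' h, (Iseg l n).min'_mem h, fun t ht => Finset.min'_le _ t ht⟩
    have hmmem : (1 ≤ m ∧ m ≤ n) ∧ (n : ℝ) - l n + 1 ≤ m := by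
      simpa [Iseg, Finset.mem_filter, Finset.mem_Icc] using hmmem0
    have hsub : Iseg l n ⊆ Finset.Icc m n := by
      intro t ht
      have hmin' := hmin t ht
      simp only [Iseg, Finset.mem_filter, Finset.mem_Icc] at ht
      exact Finset.mem_Icc.mpr ⟨hmin', ht.1.2⟩
    have hcard := Finset.card_le_card hsub
    rw [Nat.card_Icc] at hcard
    have hmn : m ≤ n := hmmem.1.2
    have hc : ((Iseg l n).card : ℝ) ≤ (n : ℝ) + 1 - m := by
      have h2 := (Nat.cast_le (α := ℝ)).mpr hcard
      rwa [Nat.cast_sub (by omega), Nat.cast_add, Nat.cast_one] at h2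
    linarith [hmmem.2]
  · simp [Finset.not_nonempty_iff_eq_empty.mp h, (hl n).le]

theorem stmt3 (f : ℝ → ℝ) (hf : IsUnboundedModulus f)
    (l : ℕ → ℝ) (hl : MemLambda l) (x : ℕ → ℝ) (L : ℝ)
    (hbdd : ∃ M : ℝ, ∀ t, |x t| ≤ M)
    (hconv : FLStatConv f l x L) :
    Tendsto (fun n => (1 / l n) * ∑ t ∈ Iseg l n, |x t - L|) atTop (nhds 0) := by
  obtain ⟨M, hM⟩ := hbdd
  obtain ⟨hm, -⟩ := hf
  obtain ⟨-, -, -, hl4, -⟩ := hl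
  set K := M + |L| + 1 with hKdef
  have hK1 : 1 ≤ K := by
    have h0 := abs_nonneg L
    have h1 := (abs_nonneg (x 0)).trans (hM 0)
    linarith
  have hKpos : 0 < K := by linarith
  have hKb : ∀ t, |x t - L| ≤ K := by
    intro t
    calc |x t - L| ≤ |x t| + |L| := by
          rw [sub_eq_add_neg]
          exact (abs_add_le _ _).trans (by rw [abs_neg])
      _ ≤ K := by linarith [hM t]
  rw [Metric.tendsto_atTop]
  intro ε hε
  have hξ : 0 < ε / 2 := by linarith
  have hdens := density_zero f hm l hl4
    (fun n => ((Iseg l n).filter (fun t => ε/2 ≤ ‖x t - L‖)).card)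
    (hconv (ε/2) hξ)
  rw [Metric.tendsto_atTop] at hdens
  obtain ⟨N, hN⟩ := hdens (ε / (2 * K)) (by positivity)
  refine ⟨N, fun n hn => ?_⟩
  set A := (Iseg l n).filter (fun t => ε/2 ≤ ‖x t - L‖) with hA
  have hcardA : (A.card : ℝ) / l n < ε / (2 * K) := by
    have := hN n hn
    rwa [Real.dist_eq, sub_zero,
      abs_of_nonneg (div_nonneg (Nat.cast_nonneg _) (hl4 n).le)] at this
  have hsumnn : 0 ≤ ∑ t ∈ Iseg l n, |x t - L| :=
    Finset.sum_nonneg fun t _ => abs_nonneg _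
  rw [Real.dist_eq, sub_zero, abs_of_nonneg (mul_nonneg (one_div_nonneg.mpr (hl4 n).le) hsumnn)]
  have hsplit := Finset.sum_filter_add_sum_filter_not (Iseg l n)
    (fun t => ε/2 ≤ ‖x t - L‖) (fun t => |x t - L|)
  have hbA : ∑ t ∈ A, |x t - L| ≤ (A.card : ℝ) * K := by
    have := Finset.sum_le_card_nsmul A (fun t => |x t - L|) K (fun t _ => hKb t)
    simpa [nsmul_eq_mul] using this
  have hbB : ∑ t ∈ (Iseg l n).filter (fun t => ¬ (ε/2 ≤ ‖x t - L‖)), |x t - L|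
      ≤ l n * (ε / 2) := by
    have h1 := Finset.sum_le_card_nsmul
      ((Iseg l n).filter (fun t => ¬ (ε/2 ≤ ‖x t - L‖))) (fun t => |x t - L|) (ε/2)
      (fun t ht => by
        have := (Finset.mem_filter.mp ht).2
        rw [Real.norm_eq_abs] at this
        linarith [lt_of_not_ge this])
    have h2 : (((Iseg l n).filter (fun t => ¬ (ε/2 ≤ ‖x t - L‖))).card : ℝ) ≤ l n :=
      le_trans (by exact_mod_cast Finset.card_le_card (Finset.filter_subset _ _))
        (card_Iseg_le l hl4 n)
    rw [nsmul_eq_mul] at h1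
    nlinarith
  have hS : ∑ t ∈ Iseg l n, |x t - L| < ε * l n := by
    have hA2 : (A.card : ℝ) * K < (l n) * (ε / 2) := by
      have h3 : (A.card : ℝ) < ε / (2 * K) * l n := by
        rw [div_lt_iff₀ (hl4 n)] at hcardA; linarith
      have := mul_lt_mul_of_pos_right h3 hKpos
      calc (A.card : ℝ) * K < ε / (2 * K) * l n * K := this
        _ = l n * (ε / 2) := by field_simp
    calc ∑ t ∈ Iseg l n, |x t - L|
        = (∑ t ∈ A, |x t - L|)
          + ∑ t ∈ (Iseg l n).filter (fun t => ¬ (ε/2 ≤ ‖x t - L‖)), |x t - L| := hsplit.symm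
      _ < ε * l n := by nlinarith [hbA, hbB, hA2]
  have heq : (1 / l n) * ∑ t ∈ Iseg l n, |x t - L|
      = (∑ t ∈ Iseg l n, |x t - L|) / l n := by ring
  rw [heq, div_lt_iff₀ (hl4 n)]
  linarith
end

section
/- Let f be an unbounded modulus and λ ∈ Λ. If a sequence (x_t) in a normed space X is f_λ-statistically convergent to L, then there exist sequences (y_t), (z_t) with x_t = y_t + z_t for all t, y_t → L in norm, and lim_n f(|{t ∈ I_n : z_t ≠ 0}|)/f(λ_n) = 0. Moreover if (x_t) is bounded then (y_t) and (z_t) are bounded. -/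
open Filter Finset Topology
open scoped Classical

theorem stmt4 {X : Type*} [NormedAddCommGroup X] [NormedSpace ℝ X]
    (f : ℝ → ℝ) (hf : IsUnboundedModulus f)
    (l : ℕ → ℝ) (hl : MemLambda l) (x : ℕ → X) (L : X)
    (hconv : FLStatConv f l x L) :
    ∃ y z : ℕ → X, (∀ t, x t = y t + z t) ∧
      Tendsto y atTop (nhds L) ∧
      FLDensityZero f l {t | z t ≠ 0} ∧
      ((∃ M : ℝ, ∀ t, ‖x t‖ ≤ M) →
        (∃ M : ℝ, ∀ t, ‖y t‖ ≤ M) ∧ (∃ M : ℝ, ∀ t, ‖z t‖ ≤ M)) := by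
  obtain ⟨⟨hf0, hfz, hfsub, hfmono, hfc⟩, hfu⟩ := hf
  obtain ⟨hl1, hlmono, hlstep, hlpos, hltop⟩ := hl
  have hflpos : ∀ n, 0 < f (l n) := by
    intro n
    rcases lt_or_eq_of_le (hf0 (l n) (hlpos n).le) with h | h
    · exact h
    · exfalso
      have := (hfz (l n) (hlpos n).le).1 h.symm
      exact (hlpos n).ne' this
  -- For each k, pick N k working for ξ = 1/(k+1)
  have hN : ∀ k : ℕ, ∃ N : ℕ, ∀ n ≥ N,
      f (((Iseg l n).filter (fun t => (1:ℝ)/(k+1) ≤ ‖x t - L‖)).card) / f (l n)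
        < 1/(k+1) := by
    intro k
    have hk : (0:ℝ) < 1/(k+1) := by positivity
    have h2 := (hconv (1/(k+1)) hk).eventually (Iio_mem_nhds hk)
    rw [eventually_atTop] at h2
    obtain ⟨N, hN⟩ := h2
    exact ⟨N, fun n hn => hN n hn⟩
  choose N hN using hN
  -- the blocks
  set m : ℕ → ℕ := fun j => Nat.rec (N 1) (fun j mj => max (mj + 1) (N (j+2))) j with hm
  have hm0 : m 0 = N 1 := rfl
  have hms : ∀ j, m (j+1) = max (m j + 1) (N (j+2)) := fun j => rfl
  have hmmono : StrictMono m := by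
    apply strictMono_nat_of_lt_succ
    intro j
    rw [hms]
    exact lt_of_lt_of_le (Nat.lt_succ_self _) (le_max_left _ _)
  have hmN : ∀ j, N (j+1) ≤ m j := by
    intro j
    cases j with
    | zero => exact le_of_eq hm0.symm
    | succ i => rw [hms]; exact le_max_right _ _
  have hjm : ∀ j, j ≤ m j := fun j => hmmono.le_apply
  set J : ℕ → ℕ := fun t => 1 + ((Finset.range t).filter (fun j => m j < t)).card with hJ
  have hJ1 : ∀ t, 1 ≤ J t := fun t => Nat.le_add_right 1 _
  have hJpos : ∀ t, (0:ℝ) < (J t : ℝ) := by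
    intro t
    exact_mod_cast Nat.lt_of_lt_of_le Nat.zero_lt_one (hJ1 t)
  have hJmono : Monotone J := by
    intro a b hab
    apply Nat.add_le_add_left
    apply Finset.card_le_card
    intro j hj
    rw [Finset.mem_filter, Finset.mem_range] at hj ⊢
    exact ⟨lt_of_lt_of_le hj.1 hab, lt_of_lt_of_le hj.2 hab⟩
  have hJtop : Tendsto J atTop atTop := by
    rw [tendsto_atTop_atTop]
    intro b
    refine ⟨m b + 1, fun n hn => ?_⟩
    have hsub : Finset.range (b+1) ⊆ (Finset.range n).filter (fun j => m j < n) := by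
      intro j hj
      rw [Finset.mem_range] at hj
      have hjb : j ≤ b := Nat.lt_succ_iff.mp hj
      have hmjb : m j ≤ m b := hmmono.monotone hjb
      rw [Finset.mem_filter, Finset.mem_range]
      constructor
      · exact lt_of_le_of_lt (le_trans (hjm j) hmjb) hn
      · exact lt_of_le_of_lt hmjb hn
    have := Finset.card_le_card hsub
    rw [Finset.card_range] at this
    calc b ≤ b + 1 := Nat.le_succ b
      _ ≤ _ := this
      _ ≤ J n := Nat.le_add_left _ _
  -- key estimate
  have hkey : ∀ n, N 0 ≤ n →
      f (((Iseg l n).filter (fun t => (1:ℝ)/(J n) ≤ ‖x t - L‖)).card) / f (l n)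
        < 1/(J n) := by
    intro n hn
    cases hcv : ((Finset.range n).filter (fun j => m j < n)).card with
    | zero =>
      have hJcast : ((J n : ℕ) : ℝ) = 1 := by
        have : J n = 1 + ((Finset.range n).filter (fun j => m j < n)).card := rfl
        rw [this, hcv]; norm_num
      rw [hJcast]
      have := hN 0 n hn
      simpa using this
    | succ d =>
      have hJcast : ((J n : ℕ) : ℝ) = ((d:ℝ) + 1) + 1 := by
        have : J n = 1 + ((Finset.range n).filter (fun j => m j < n)).card := rfl
        rw [this, hcv]; push_cast; ring
      rw [hJcast]
      have hmd : m d < n := by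
        by_contra hcon
        push_neg at hcon
        have hsub : (Finset.range n).filter (fun j => m j < n) ⊆ Finset.range d := by
          intro j hj
          rw [Finset.mem_filter] at hj
          rw [Finset.mem_range]
          by_contra hjd
          push_neg at hjd
          exact absurd (lt_of_lt_of_le hj.2 hcon) (not_lt.mpr (hmmono.monotone hjd))
        have := Finset.card_le_card hsub
        rw [Finset.card_range, hcv] at this
        omega
      have hnd : N (d+1) ≤ n := le_trans (hmN d) hmd.le
      have := hN (d+1) n hnd
      have hcast : ((d+1 : ℕ) : ℝ) + 1 = ((d : ℕ) : ℝ) + 1 + 1 := by push_cast; ring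
      rw [hcast] at this
      convert this using 4
  -- define the decomposition
  set y : ℕ → X := fun t => if 1 ≤ t ∧ ‖x t - L‖ < 1/(J t) then x t else L with hy
  set z : ℕ → X := fun t => x t - y t with hz
  refine ⟨y, z, ?_, ?_, ?_, ?_⟩
  · intro t
    show x t = y t + (x t - y t)
    abel
  · -- y tends to L
    rw [tendsto_iff_norm_sub_tendsto_zero]
    have h1div : Tendsto (fun t => 1/((J t : ℕ) : ℝ)) atTop (nhds 0) :=
      tendsto_one_div_atTop_nhds_zero_nat.comp hJtop
    apply squeeze_zero (fun t => norm_nonneg _) _ h1div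
    intro t
    simp only [hy]
    split_ifs with h
    · exact h.2.le
    · simp only [sub_self, norm_zero]
      exact (one_div_pos.mpr (hJpos t)).le
  · -- density zero
    have h1div : Tendsto (fun n => 1/((J n : ℕ) : ℝ)) atTop (nhds 0) :=
      tendsto_one_div_atTop_nhds_zero_nat.comp hJtop
    refine tendsto_of_tendsto_of_tendsto_of_le_of_le' tendsto_const_nhds h1div
      (Eventually.of_forall (fun n => div_nonneg (hf0 _ (Nat.cast_nonneg _)) (hflpos n).le)) ?_
    rw [eventually_atTop]
    refine ⟨N 0, fun n hn => ?_⟩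
    refine le_trans ?_ (hkey n hn).le
    rw [div_le_div_iff_of_pos_right (hflpos n)]
    apply hfmono _ _ (Nat.cast_nonneg _)
    apply Nat.cast_le.mpr
    apply Finset.card_le_card
    intro t ht
    simp only [Finset.mem_filter] at ht ⊢
    refine ⟨ht.1, ?_⟩
    have ht1 : 1 ≤ t := by
      have := ht.1
      rw [Iseg, Finset.mem_filter, Finset.mem_Icc] at this
      exact this.1.1
    have htn : t ≤ n := by
      have := ht.1
      rw [Iseg, Finset.mem_filter, Finset.mem_Icc] at this
      exact this.1.2
    have hztne : z t ≠ 0 := ht.2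
    have hnotcond : ¬ (1 ≤ t ∧ ‖x t - L‖ < 1/(J t)) := by
      intro hcond
      apply hztne
      rw [hz, hy]
      simp only [if_pos hcond]
      exact sub_self _
    have hge : 1/((J t : ℕ) : ℝ) ≤ ‖x t - L‖ := by
      by_contra hcon
      push_neg at hcon
      exact hnotcond ⟨ht1, hcon⟩
    calc (1:ℝ)/(J n) ≤ 1/(J t) := by
          apply one_div_le_one_div_of_le (hJpos t)
          exact_mod_cast hJmono htn
      _ ≤ ‖x t - L‖ := hge
  · -- boundedness
    rintro ⟨M, hM⟩
    have hybnd : ∀ t, ‖y t‖ ≤ max M ‖L‖ := by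
      intro t
      simp only [hy]
      split_ifs with h
      · exact le_trans (hM t) (le_max_left _ _)
      · exact le_max_right _ _
    refine ⟨⟨max M ‖L‖, hybnd⟩, ⟨M + max M ‖L‖, fun t => ?_⟩⟩
    show ‖x t - y t‖ ≤ M + max M ‖L‖
    calc ‖x t - y t‖ ≤ ‖x t‖ + ‖y t‖ := norm_sub_le _ _
      _ ≤ M + max M ‖L‖ := add_le_add (hM t) (hybnd t)
end

section
/- Let f be an unbounded modulus, λ ∈ Λ, and (x_t) a sequence in a normed space X. If (x_t) is f_λ-statistically convergent to x, then there exists T ⊆ ℕ with f_λ-density zero such that the subsequence of (x_t) along ℕ\T converges to x in norm. -/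
open Filter Finset Topology
open scoped Classical

theorem stmt7 {X : Type*} [NormedAddCommGroup X] [NormedSpace ℝ X]
    (f : ℝ → ℝ) (hf : IsUnboundedModulus f)
    (l : ℕ → ℝ) (hl : MemLambda l) (xs : ℕ → X) (x : X)
    (hconv : FLStatConv f l xs x) :
    ∃ T : Set ℕ, FLDensityZero f l T ∧
      Tendsto xs (atTop ⊓ Filter.principal Tᶜ) (nhds x) := by
  obtain ⟨⟨hf0, hfz, hfsub, hfmono, hfc⟩, hfu⟩ := hf
  obtain ⟨hl1, hlmono, hlstep, hlpos, hltop⟩ := hl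
  have hflpos : ∀ n, 0 < f (l n) := by
    intro n
    rcases (hf0 (l n) (hlpos n).le).lt_or_eq with h | h
    · exact h
    · exact absurd ((hfz (l n) (hlpos n).le).mp h.symm) (hlpos n).ne'
  set d : ℕ → ℕ → ℝ := fun j n =>
    f (((Iseg l n).filter (fun t => 1/(j+1:ℝ) ≤ ‖xs t - x‖)).card) / f (l n) with hd
  have hB : ∀ j : ℕ, ∃ B : ℕ, ∀ n ≥ B, d j n < 1/(j+1:ℝ) := by
    intro j
    obtain ⟨Bj, hBj⟩ := (Metric.tendsto_atTop.mp
      (hconv (1/(j+1:ℝ)) (by positivity))) (1/(j+1:ℝ)) (by positivity)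
    refine ⟨Bj, fun n hn => ?_⟩
    have h2 := hBj n hn
    rw [Real.dist_eq, sub_zero] at h2
    exact lt_of_le_of_lt (le_abs_self _) h2
  choose B hBspec using hB
  obtain ⟨N, hNmono, hBN⟩ : ∃ N : ℕ → ℕ, StrictMono N ∧ ∀ j, B j ≤ N j := by
    refine ⟨fun j => Nat.rec (B 0) (fun j Nj => max (Nj + 1) (B (j+1))) j, ?_, ?_⟩
    · apply strictMono_nat_of_lt_succ
      intro j
      exact lt_of_lt_of_le (Nat.lt_succ_self _) (le_max_left _ _)
    · intro j
      cases j with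
      | zero => exact le_refl _
      | succ j => exact le_max_right _ _
  have hdN : ∀ j n, N j < n → d j n < 1/(j+1:ℝ) := fun j n hn =>
    hBspec j n (le_of_lt (lt_of_le_of_lt (hBN j) hn))
  set T : Set ℕ :=
    {t | ∃ j, N j < t ∧ t ≤ N (j+1) ∧ 1/(j+1:ℝ) ≤ ‖xs t - x‖} with hT
  have hfind : ∀ n, N 0 < n → ∃ j, N j < n ∧ n ≤ N (j+1) ∧
      (∀ J, N J < n → J ≤ j) := by
    intro n hn
    have hspec := Nat.findGreatest_spec (P := fun j => N j < n) (Nat.zero_le n) hn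
    refine ⟨Nat.findGreatest (fun j => N j < n) n, hspec, ?_, ?_⟩
    · by_cases hc : Nat.findGreatest (fun j => N j < n) n + 1 ≤ n
      · exact le_of_not_gt (Nat.findGreatest_is_greatest (P := fun j => N j < n) (Nat.lt_succ_self _) hc)
      · have : n ≤ Nat.findGreatest (fun j => N j < n) n + 1 := le_of_not_ge hc
        exact this.trans (hNmono.le_apply)
    · intro J hJ
      exact Nat.le_findGreatest (le_of_lt (lt_of_le_of_lt hNmono.le_apply hJ)) hJ
  refine ⟨T, ?_, ?_⟩
  · -- density zero
    rw [FLDensityZero, Metric.tendsto_atTop]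
    intro ε hε
    obtain ⟨J, hJ⟩ := exists_nat_one_div_lt hε
    refine ⟨N J + 1, fun n hn => ?_⟩
    have hn0 : N 0 < n := lt_of_le_of_lt (hNmono.monotone (Nat.zero_le J))
      (lt_of_lt_of_le (Nat.lt_succ_self _) hn)
    obtain ⟨j, hj1, hj2, hjmax⟩ := hfind n hn0
    have hJj : J ≤ j := hjmax J (lt_of_lt_of_le (Nat.lt_succ_self _) hn)
    have hsub : (Iseg l n).filter (fun t => t ∈ T) ⊆
        (Iseg l n).filter (fun t => 1/(j+1:ℝ) ≤ ‖xs t - x‖) := by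
      intro t ht
      rw [Finset.mem_filter] at ht ⊢
      refine ⟨ht.1, ?_⟩
      obtain ⟨i, hi1, hi2, hi3⟩ := ht.2
      have htn : t ≤ n := (Finset.mem_Icc.mp (Finset.mem_filter.mp ht.1).1).2
      have hij : i ≤ j := by
        by_contra hc
        push_neg at hc
        have : N (j+1) ≤ N i := hNmono.monotone hc
        omega
      refine le_trans ?_ hi3
      apply one_div_le_one_div_of_le (by positivity)
      have : (i : ℝ) ≤ (j : ℝ) := Nat.cast_le.mpr hij
      linarith
    have hcard : ((((Iseg l n).filter (fun t => t ∈ T)).card : ℝ)) ≤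
        (((Iseg l n).filter (fun t => 1/(j+1:ℝ) ≤ ‖xs t - x‖)).card : ℝ) :=
      Nat.cast_le.mpr (Finset.card_le_card hsub)
    have hle : f (((Iseg l n).filter (fun t => t ∈ T)).card) / f (l n) ≤ d j n :=
      (div_le_div_iff_of_pos_right (hflpos n)).mpr (hfmono _ _ (Nat.cast_nonneg _) hcard)
    have hnn : 0 ≤ f (((Iseg l n).filter (fun t => t ∈ T)).card) / f (l n) :=
      div_nonneg (hf0 _ (Nat.cast_nonneg _)) (hflpos n).le
    rw [Real.dist_eq, sub_zero, abs_of_nonneg hnn]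
    calc f (((Iseg l n).filter (fun t => t ∈ T)).card) / f (l n) ≤ d j n := hle
      _ < 1/(j+1:ℝ) := hdN j n hj1
      _ ≤ 1/(J+1:ℝ) := by
          apply one_div_le_one_div_of_le (by positivity)
          have : (J : ℝ) ≤ (j : ℝ) := Nat.cast_le.mpr hJj
          linarith
      _ < ε := hJ
  · -- convergence
    rw [Metric.tendsto_nhds]
    intro ε hε
    obtain ⟨J, hJ⟩ := exists_nat_one_div_lt hε
    rw [eventually_inf_principal]
    filter_upwards [eventually_ge_atTop (N J + 1)] with t ht htc
    have hn0 : N 0 < t := lt_of_le_of_lt (hNmono.monotone (Nat.zero_le J))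
      (lt_of_lt_of_le (Nat.lt_succ_self _) ht)
    obtain ⟨j, hj1, hj2, hjmax⟩ := hfind t hn0
    have hJj : J ≤ j := hjmax J (lt_of_lt_of_le (Nat.lt_succ_self _) ht)
    have hnotT : ¬ (1/(j+1:ℝ) ≤ ‖xs t - x‖) := by
      intro hcon
      exact htc ⟨j, hj1, hj2, hcon⟩
    push_neg at hnotT
    rw [dist_eq_norm]
    calc ‖xs t - x‖ < 1/(j+1:ℝ) := hnotT
      _ ≤ 1/(J+1:ℝ) := by
          apply one_div_le_one_div_of_le (by positivity)
          have : (J : ℝ) ≤ (j : ℝ) := Nat.cast_le.mpr hJj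
          linarith
      _ < ε := hJ
end

section
/- Let f be an unbounded modulus, λ ∈ Λ, and (x_t) a sequence in a normed space X. If there exists T ⊆ ℕ with f_λ-density zero such that x_t → x along ℕ\T, then (x_t) is f_λ-statistically convergent to x. -/
open Filter Finset Topology
open scoped Classical

lemma fl_atTop (f : ℝ → ℝ) (hf : IsUnboundedModulus f) (l : ℕ → ℝ)
    (hl : Tendsto l atTop atTop) : Tendsto (fun n => f (l n)) atTop atTop := by
  obtain ⟨⟨_, _, _, hmono, _⟩, hub⟩ := hf
  rw [tendsto_atTop]
  intro M
  obtain ⟨y, hy0, hy⟩ := hub M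
  filter_upwards [hl.eventually_ge_atTop y] with n hn
  exact le_of_lt (lt_of_lt_of_le hy (hmono y (l n) hy0 hn))

theorem stmt8 {X : Type*} [NormedAddCommGroup X] [NormedSpace ℝ X]
    (f : ℝ → ℝ) (hf : IsUnboundedModulus f)
    (l : ℕ → ℝ) (hl : MemLambda l) (xs : ℕ → X) (x : X)
    (T : Set ℕ) (hT : FLDensityZero f l T)
    (hconv : Tendsto xs (atTop ⊓ Filter.principal Tᶜ) (nhds x)) :
    FLStatConv f l xs x := by
  obtain ⟨hnn, hzero, hsub, hmono, _⟩ := hf.1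
  intro xi hxi
  have hev : ∀ᶠ t in atTop ⊓ Filter.principal Tᶜ, ‖xs t - x‖ < xi := by
    have := Metric.tendsto_nhds.mp hconv xi hxi
    filter_upwards [this] with t ht
    simpa [dist_eq_norm] using ht
  rw [Filter.eventually_inf_principal, eventually_atTop] at hev
  obtain ⟨N, hN⟩ := hev
  have hlpos := hl.2.2.2.1
  have hflpos : ∀ n, 0 < f (l n) := fun n => by
    rcases lt_or_eq_of_le (hnn (l n) (hlpos n).le) with h | h
    · exact h
    · exact absurd ((hzero (l n) (hlpos n).le).mp h.symm) (hlpos n).ne'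
  set A : ℕ → Finset ℕ := fun n => (Iseg l n).filter (fun t => xi ≤ ‖xs t - x‖) with hA
  set B : ℕ → Finset ℕ := fun n => (Iseg l n).filter (fun t => t ∈ T) with hB
  have hsubset : ∀ n, A n ⊆ B n ∪ Finset.range N := by
    intro n t ht
    simp only [hA, Finset.mem_filter] at ht
    obtain ⟨htI, htxi⟩ := ht
    by_cases htT : t ∈ T
    · exact Finset.mem_union_left _ (Finset.mem_filter.mpr ⟨htI, htT⟩)
    · refine Finset.mem_union_right _ (Finset.mem_range.mpr ?_)
      by_contra h
      exact absurd (hN t (not_lt.mp h) htT) (not_lt.mpr htxi)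
  have hcard : ∀ n, ((A n).card : ℝ) ≤ (B n).card + N := by
    intro n
    have := (Finset.card_le_card (hsubset n)).trans (Finset.card_union_le _ _)
    calc ((A n).card : ℝ) ≤ ((B n).card + (Finset.range N).card : ℕ) := by exact_mod_cast this
      _ = (B n).card + N := by simp
  have hfb : ∀ n, f ((A n).card) / f (l n) ≤ f ((B n).card) / f (l n) + f N / f (l n) := by
    intro n
    rw [← add_div, div_le_div_iff_of_pos_right (hflpos n)]
    calc f ((A n).card) ≤ f (((B n).card : ℝ) + N) :=
          hmono _ _ (Nat.cast_nonneg _) (hcard n)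
      _ ≤ f ((B n).card) + f N := hsub _ (Nat.cast_nonneg _) _ (Nat.cast_nonneg _)
  have hup : Tendsto (fun n => f ((B n).card) / f (l n) + f N / f (l n)) atTop (nhds 0) := by
    have h1 : Tendsto (fun n => f ((B n).card) / f (l n)) atTop (nhds 0) := hT
    have h2 : Tendsto (fun n => f N / f (l n)) atTop (nhds 0) :=
      Tendsto.div_atTop tendsto_const_nhds (fl_atTop f hf l hl.2.2.2.2)
    simpa using h1.add h2
  refine squeeze_zero (fun n => ?_) hfb hup
  exact div_nonneg (hnn _ (Nat.cast_nonneg _)) (hflpos n).le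
end

section
/- Let f be an unbounded modulus, λ ∈ Λ, X a normed space. Every f_λ-statistically convergent sequence in X is f_λ-statistically Cauchy. -/
open Filter Finset Topology
open scoped Classical

lemma l_le_n (l : ℕ → ℝ) (hl : MemLambda l) : ∀ n, 1 ≤ n → l n ≤ n := by
  intro n hn
  induction n with
  | zero => omega
  | succ m ih =>
    rcases Nat.eq_or_lt_of_le hn with h | h
    · simp [← h, hl.1]
    · have hm : 1 ≤ m := by omega
      have := hl.2.2.1 m
      push_cast
      linarith [ih hm]

lemma f_tendsto_atTop (f : ℝ → ℝ) (hf : IsUnboundedModulus f)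
    (l : ℕ → ℝ) (hl : MemLambda l) :
    Tendsto (fun n => f (l n)) atTop atTop := by
  rw [tendsto_atTop]
  intro M
  obtain ⟨x₀, hx₀, hMx₀⟩ := hf.2 M
  have : ∀ᶠ n in atTop, x₀ ≤ l n := hl.2.2.2.2.eventually_ge_atTop x₀
  filter_upwards [this] with n hn
  exact le_of_lt (lt_of_lt_of_le hMx₀ (hf.1.2.2.2.1 x₀ (l n) hx₀ hn))

lemma card_Iseg_large (l : ℕ → ℝ) (hl : MemLambda l) (n : ℕ) (hn : 1 ≤ n) :
    l n ≤ ((Iseg l n).card : ℝ) + 1 := by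
  have hln1 : 1 ≤ l n := hl.1 ▸ hl.2.1 hn
  have hlen : l n ≤ n := l_le_n l hl n hn
  set k : ℕ := ⌊l n⌋₊ with hk
  have hk1 : 1 ≤ k := Nat.le_floor (by exact_mod_cast hln1)
  have hkn : k ≤ n := Nat.floor_le_of_le hlen |>.trans (by simp)
  have hkn' : k ≤ n := by
    have := Nat.floor_le_floor hlen
    simpa using this
  have hsub : Finset.Icc (n + 1 - k) n ⊆ Iseg l n := by
    intro t ht
    simp only [Finset.mem_Icc] at ht
    simp only [Iseg, Finset.mem_filter, Finset.mem_Icc]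
    have hm1 : 1 ≤ n + 1 - k := by omega
    refine ⟨⟨by omega, ht.2⟩, ?_⟩
    have hcast : ((n + 1 - k : ℕ) : ℝ) = (n : ℝ) + 1 - k := by
      push_cast [Nat.cast_sub (by omega : k ≤ n + 1)]; ring
    have hkl : (k : ℝ) ≤ l n := Nat.floor_le (by linarith)
    have : ((n + 1 - k : ℕ) : ℝ) ≤ (t : ℝ) := by exact_mod_cast ht.1
    rw [hcast] at this
    linarith
  have hcard : k ≤ (Iseg l n).card := by
    have := Finset.card_le_card hsub
    rwa [Nat.card_Icc, show n + 1 - (n + 1 - k) = k by omega] at this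
  have : l n < (k : ℝ) + 1 := Nat.lt_floor_add_one _
  have : (k : ℝ) ≤ ((Iseg l n).card : ℝ) := by exact_mod_cast hcard
  linarith [Nat.lt_floor_add_one (l n)]

theorem stmt9 {X : Type*} [NormedAddCommGroup X] [NormedSpace ℝ X]
    (f : ℝ → ℝ) (hf : IsUnboundedModulus f)
    (l : ℕ → ℝ) (hl : MemLambda l) (xs : ℕ → X) (x : X)
    (hconv : FLStatConv f l xs x) :
    ∀ ξ : ℝ, 0 < ξ → ∃ Q : ℕ, FLDensityZero f l {t | ξ ≤ ‖xs t - xs Q‖} := by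
  obtain ⟨⟨hf0, hfz, hfsub, hfmono, _⟩, hfub⟩ := hf
  intro ξ hξ
  have h2 := hconv (ξ/2) (by positivity)
  have hfl_pos : ∀ n, 0 < f (l n) := by
    intro n
    have hln := (hl.2.2.2.1 n).le
    rcases lt_or_eq_of_le (hf0 _ hln) with h | h
    · exact h
    · exact absurd ((hfz _ hln).mp h.symm) (ne_of_gt (hl.2.2.2.1 n))
  -- find Q with ‖xs Q - x‖ < ξ/2
  have hQ : ∃ Q : ℕ, ‖xs Q - x‖ < ξ / 2 := by
    by_contra hc
    push_neg at hc
    have hfull : ∀ n, ((Iseg l n).filter (fun t => ξ/2 ≤ ‖xs t - x‖)) = Iseg l n := by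
      intro n
      apply Finset.filter_true_of_mem
      intro t _
      exact hc t
    -- the ratio is eventually ≥ 1/2, contradicting tendsto 0
    have hfl_top : Tendsto (fun n => f (l n)) atTop atTop := by
      rw [tendsto_atTop]
      intro M
      obtain ⟨x₀, hx₀, hMx₀⟩ := hfub M
      filter_upwards [hl.2.2.2.2.eventually_ge_atTop x₀] with n hn
      exact le_of_lt (lt_of_lt_of_le hMx₀ (hfmono x₀ (l n) hx₀ hn))
    have hbig : ∀ᶠ n in atTop,
        (1:ℝ)/2 ≤ f (((Iseg l n).filter (fun t => ξ/2 ≤ ‖xs t - x‖)).card) / f (l n) := by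
      filter_upwards [hfl_top.eventually_ge_atTop (2 * f 1), eventually_ge_atTop 1]
        with n hfn hn1
      rw [hfull n]
      have hcard := card_Iseg_large l hl n hn1
      have hcn : (0:ℝ) ≤ ((Iseg l n).card : ℝ) := by positivity
      have hstep : f (l n) ≤ f (((Iseg l n).card : ℝ)) + f 1 :=
        le_trans (hfmono _ _ (hl.2.2.2.1 n).le hcard)
          (hfsub _ hcn 1 zero_le_one)
      rw [le_div_iff₀ (hfl_pos n)]
      nlinarith [hf0 1 zero_le_one]
    have h0 : ∀ᶠ n in atTop,
        f (((Iseg l n).filter (fun t => ξ/2 ≤ ‖xs t - x‖)).card) / f (l n) < (1:ℝ)/2 :=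
      h2.eventually (eventually_lt_nhds (by norm_num : (0:ℝ) < 1/2))
    obtain ⟨n, hb, h0'⟩ := (hbig.and h0).exists
    linarith
  obtain ⟨Q, hQlt⟩ := hQ
  refine ⟨Q, ?_⟩
  unfold FLDensityZero
  have hsubset : ∀ n, ((Iseg l n).filter (fun t => t ∈ {t | ξ ≤ ‖xs t - xs Q‖})) ⊆
      ((Iseg l n).filter (fun t => ξ/2 ≤ ‖xs t - x‖)) := by
    intro n t ht
    simp only [Finset.mem_filter, Set.mem_setOf_eq] at ht ⊢
    refine ⟨ht.1, ?_⟩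
    have htri : ‖xs t - xs Q‖ ≤ ‖xs t - x‖ + ‖xs Q - x‖ := by
      have := norm_sub_le (xs t - x) (xs Q - x)
      simpa [sub_sub_sub_cancel_right] using this
    linarith [ht.2]
  apply tendsto_of_tendsto_of_tendsto_of_le_of_le tendsto_const_nhds h2
  · intro n
    apply div_nonneg (hf0 _ (by positivity)) (hfl_pos n).le
  · intro n
    refine (div_le_div_iff_of_pos_right (hfl_pos n)).mpr ?_
    exact hfmono _ _ (by positivity) (by exact_mod_cast Finset.card_le_card (hsubset n))
end

section
/- Let X be a Banach space, f an unbounded modulus, λ ∈ Λ. Every f_λ-statistically Cauchy sequence in X is f_λ-statistically convergent (to some limit in X). -/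
open Filter Finset Topology
open scoped Classical

lemma flposden {f : ℝ → ℝ} {l : ℕ → ℝ} (hf : IsModulus f) (hl : MemLambda l) (n : ℕ) :
    0 < f (l n) := by
  have h0 := hl.2.2.2.1 n
  rcases (hf.1 (l n) h0.le).lt_or_eq with h | h
  · exact h
  · exact absurd ((hf.2.1 (l n) h0.le).mp h.symm) h0.ne'

lemma dens_mono {f : ℝ → ℝ} {l : ℕ → ℝ} (hf : IsModulus f) (hl : MemLambda l) {S T : Set ℕ}
    (hST : S ⊆ T) (hT : FLDensityZero f l T) : FLDensityZero f l S := by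
  refine squeeze_zero (fun n => div_nonneg (hf.1 _ (Nat.cast_nonneg _)) (flposden hf hl n).le)
    (fun n => ?_) hT
  apply div_le_div_of_nonneg_right ?_ (flposden hf hl n).le
  · apply hf.2.2.2.1 _ _ (Nat.cast_nonneg _)
    exact_mod_cast Finset.card_le_card (Finset.monotone_filter_right _ (fun t _ ht => hST ht))

lemma dens_union {f : ℝ → ℝ} {l : ℕ → ℝ} (hf : IsModulus f) (hl : MemLambda l) {S T : Set ℕ}
    (hS : FLDensityZero f l S) (hT : FLDensityZero f l T) : FLDensityZero f l (S ∪ T) := by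
  have hsum := hS.add hT
  rw [add_zero] at hsum
  refine squeeze_zero (fun n => div_nonneg (hf.1 _ (Nat.cast_nonneg _)) (flposden hf hl n).le)
    (fun n => ?_) hsum
  rw [← add_div]
  apply div_le_div_of_nonneg_right ?_ (flposden hf hl n).le
  have hcard : (@Finset.filter ℕ (fun t => t ∈ S ∪ T) (fun a => Classical.propDecidable _) (Iseg l n)).card ≤
      ((Iseg l n).filter (fun t => t ∈ S)).card + ((Iseg l n).filter (fun t => t ∈ T)).card := by
    refine le_trans (Finset.card_le_card (show _ ⊆
        (Iseg l n).filter (fun t => t ∈ S) ∪ (Iseg l n).filter (fun t => t ∈ T) from ?_))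
      (Finset.card_union_le _ _)
    intro t ht
    simp only [Finset.mem_filter, Finset.mem_union, Set.mem_union] at ht ⊢
    tauto
  refine le_trans (hf.2.2.2.1 _ ((((Iseg l n).filter (fun t => t ∈ S)).card : ℝ) +
          (((Iseg l n).filter (fun t => t ∈ T)).card : ℝ)) (Nat.cast_nonneg _)
          (by exact_mod_cast hcard))
    (hf.2.2.1 _ (Nat.cast_nonneg _) _ (Nat.cast_nonneg _))

lemma l_le {l : ℕ → ℝ} (hl : MemLambda l) : ∀ n, 1 ≤ n → l n ≤ n := by
  intro n hn
  induction n, hn using Nat.le_induction with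
  | base => simp [hl.1]
  | succ n hn ih =>
      calc l (n + 1) ≤ l n + 1 := hl.2.2.1 n
        _ ≤ (n:ℝ) + 1 := by linarith
        _ ≤ ((n+1 : ℕ):ℝ) := by push_cast; linarith

lemma Iseg_card_lt {l : ℕ → ℝ} (hl : MemLambda l) (n : ℕ) (hn : 1 ≤ n) (h1 : 1 ≤ l n) :
    l n - 1 < ((Iseg l n).card : ℝ) := by
  set b := ⌊l n⌋₊ with hb
  have hbn : b ≤ n := by
    have := Nat.floor_le_floor (l_le hl n hn)
    simpa using this
  have hb1 : 1 ≤ b := Nat.le_floor (by exact_mod_cast h1)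
  have hsub : Finset.Icc (n - b + 1) n ⊆ Iseg l n := by
    intro t ht
    simp only [Finset.mem_Icc] at ht
    simp only [Iseg, Finset.mem_filter, Finset.mem_Icc]
    refine ⟨⟨le_trans (by omega) ht.1, ht.2⟩, ?_⟩
    have hbl : (b : ℝ) ≤ l n := Nat.floor_le (by linarith)
    have : ((n - b + 1 : ℕ) : ℝ) ≤ t := by exact_mod_cast ht.1
    have hcast : ((n - b + 1 : ℕ) : ℝ) = (n : ℝ) - b + 1 := by
      push_cast [Nat.cast_sub hbn]; ring
    linarith [hcast ▸ this]
  have hcard : b ≤ (Iseg l n).card := by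
    have := Finset.card_le_card hsub
    rwa [Nat.card_Icc, show n + 1 - (n - b + 1) = b by omega] at this
  have hfl : l n - 1 < b := Nat.sub_one_lt_floor (l n)
  calc l n - 1 < (b : ℝ) := hfl
    _ ≤ _ := by exact_mod_cast hcard

lemma compl_nonempty {f : ℝ → ℝ} {l : ℕ → ℝ} (hf : IsModulus f)
    (hunb : ∀ M : ℝ, ∃ x, 0 ≤ x ∧ M < f x)
    (hl : MemLambda l) {T : Set ℕ} (hT : FLDensityZero f l T) : ∃ t, t ∉ T := by
  have hfl : Tendsto (fun n => f (l n)) atTop atTop := by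
    rw [tendsto_atTop]
    intro M
    obtain ⟨x0, hx0, hM⟩ := hunb M
    filter_upwards [hl.2.2.2.2.eventually_ge_atTop x0] with n hn
    exact le_of_lt (lt_of_lt_of_le hM (hf.2.2.2.1 _ _ hx0 hn))
  have hev1 : ∀ᶠ n in atTop, 2 * f 1 < f (l n) := hfl.eventually_gt_atTop _
  have hev2 : ∀ᶠ n in atTop, (1:ℝ) ≤ l n := hl.2.2.2.2.eventually_ge_atTop 1
  have hev3 : ∀ᶠ n in atTop,
      f (((Iseg l n).filter (fun t => t ∈ T)).card) / f (l n) < 1/2 := by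
    have := hT.eventually (eventually_lt_nhds (show (0:ℝ) < 1/2 by norm_num))
    exact this
  have hev4 : ∀ᶠ n : ℕ in atTop, 1 ≤ n := eventually_ge_atTop 1
  obtain ⟨n, h1, h2, h3, h4⟩ := (hev1.and (hev2.and (hev3.and hev4))).exists
  by_contra h
  push_neg at h
  have hfilter : (Iseg l n).filter (fun t => t ∈ T) = Iseg l n :=
    Finset.filter_true_of_mem (fun t _ => h t)
  rw [hfilter] at h3
  have hcard := Iseg_card_lt hl n h4 h2
  -- f (l n) ≤ f (card) + f 1
  have hf1pos : 0 < f 1 := by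
    rcases (hf.1 1 zero_le_one).lt_or_eq with hp | hp
    · exact hp
    · exact absurd ((hf.2.1 1 zero_le_one).mp hp.symm) one_ne_zero
  have hflpos : 0 < f (l n) := flposden hf hl n
  have hle : f (l n) ≤ f ((Iseg l n).card) + f 1 := by
    calc f (l n) ≤ f (((Iseg l n).card : ℝ) + 1) :=
          hf.2.2.2.1 _ _ (hl.2.2.2.1 n).le (by linarith)
      _ ≤ _ := hf.2.2.1 _ (Nat.cast_nonneg _) 1 zero_le_one
  have : 1/2 < f ((Iseg l n).card) / f (l n) := by
    rw [lt_div_iff₀ hflpos]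
    linarith
  linarith

theorem stmt10 {X : Type*} [NormedAddCommGroup X] [NormedSpace ℝ X] [CompleteSpace X]
    (f : ℝ → ℝ) (hf : IsUnboundedModulus f)
    (l : ℕ → ℝ) (hl : MemLambda l) (xs : ℕ → X)
    (hcauchy : ∀ ξ : ℝ, 0 < ξ → ∃ Q : ℕ, FLDensityZero f l {t | ξ ≤ ‖xs t - xs Q‖}) :
    ∃ x : X, FLStatConv f l xs x := by
  have hc : ∀ k : ℕ, ∃ Q, FLDensityZero f l {t | 1/((k:ℝ)+1) ≤ ‖xs t - xs Q‖} :=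
    fun k => hcauchy _ (by positivity)
  choose Q hQ using hc
  have key : ∀ m n : ℕ, ∃ t, ‖xs t - xs (Q m)‖ < 1/((m:ℝ)+1) ∧
      ‖xs t - xs (Q n)‖ < 1/((n:ℝ)+1) := by
    intro m n
    obtain ⟨t, ht⟩ := compl_nonempty hf.1 hf.2 hl (dens_union hf.1 hl (hQ m) (hQ n))
    simp only [Set.mem_union, Set.mem_setOf_eq, not_or, not_le] at ht
    exact ⟨t, ht.1, ht.2⟩
  have hy : CauchySeq (fun k => xs (Q k)) := by
    rw [Metric.cauchySeq_iff]
    intro ε hε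
    obtain ⟨K, hK⟩ := exists_nat_gt (2/ε)
    refine ⟨K, fun m hm n hn => ?_⟩
    obtain ⟨t, h1, h2⟩ := key m n
    have hm' : 1/((m:ℝ)+1) ≤ 1/((K:ℝ)+1) := by
      apply one_div_le_one_div_of_le (by positivity)
      exact_mod_cast by omega
    have hn' : 1/((n:ℝ)+1) ≤ 1/((K:ℝ)+1) := by
      apply one_div_le_one_div_of_le (by positivity)
      exact_mod_cast by omega
    have hd : dist (xs (Q m)) (xs (Q n)) < 2/((K:ℝ)+1) := by
      have := dist_triangle (xs (Q m)) (xs t) (xs (Q n))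
      rw [dist_eq_norm, dist_eq_norm, dist_eq_norm] at *
      have e2 : 2/((K:ℝ)+1) = 1/((K:ℝ)+1) + 1/((K:ℝ)+1) := by ring
      have e1 : ‖xs (Q m) - xs t‖ = ‖xs t - xs (Q m)‖ := norm_sub_rev _ _
      linarith
    have hKε : 2/((K:ℝ)+1) < ε := by
      rw [div_lt_iff₀ (by positivity)]
      rw [div_lt_iff₀ hε] at hK
      nlinarith
    linarith
  obtain ⟨L, hL⟩ := cauchySeq_tendsto_of_complete hy
  refine ⟨L, ?_⟩
  intro ξ hξ
  have h1 : ∀ᶠ k in atTop, dist (xs (Q k)) L < ξ/2 :=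
    hL.eventually (Metric.ball_mem_nhds L (by positivity))
  have h2 : ∀ᶠ k : ℕ in atTop, 1/((k:ℝ)+1) ≤ ξ/2 := by
    obtain ⟨K, hK⟩ := exists_nat_gt (2/ξ)
    filter_upwards [eventually_ge_atTop K] with k hk
    rw [div_le_div_iff₀ (by positivity) (by positivity)]
    rw [div_lt_iff₀ hξ] at hK
    have : (K:ℝ) ≤ k := by exact_mod_cast hk
    nlinarith
  obtain ⟨k, hk1, hk2⟩ := (h1.and h2).exists
  have hsub : {t : ℕ | ξ ≤ ‖xs t - L‖} ⊆ {t | 1/((k:ℝ)+1) ≤ ‖xs t - xs (Q k)‖} := by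
    intro t ht
    simp only [Set.mem_setOf_eq] at ht ⊢
    by_contra hlt
    push_neg at hlt
    have : ‖xs t - L‖ ≤ ‖xs t - xs (Q k)‖ + ‖xs (Q k) - L‖ := by
      have := norm_add_le (xs t - xs (Q k)) (xs (Q k) - L)
      simpa using this
    rw [dist_eq_norm] at hk1
    linarith
  have := dens_mono hf.1 hl hsub (hQ k)
  exact this
end

section
/- Let f be an unbounded modulus and λ ∈ Λ with liminf_{n→∞} n/f(λ_n) > 0, and suppose lim_{n→∞} f(n)/n > 0. Then every f_λ-statistically convergent sequence (x_t) of reals (with limit L) is f-statistically convergent to L, i.e. lim_n f(|{t ≤ n : |x_t − L| ≥ ξ}|)/f(n) = 0 for every ξ > 0. -/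
open Filter Finset Topology
open scoped Classical

theorem stmt11 (f : ℝ → ℝ) (hf : IsUnboundedModulus f)
    (l : ℕ → ℝ) (hl : MemLambda l)
    (hinf : 0 < Filter.atTop.liminf (fun n : ℕ => (n : ℝ) / f (l n)))
    (hlim : ∃ p : ℝ, 0 < p ∧ Tendsto (fun u : ℝ => f u / u) atTop (nhds p))
    (x : ℕ → ℝ) (L : ℝ) (hconv : FLStatConv f l x L) :
    FStatConv f x L := by
  obtain ⟨⟨hf0, -, -, hmono, -⟩, -⟩ := hf
  obtain ⟨hl1, hlmono, hlstep, hlpos, hltop⟩ := hl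
  obtain ⟨p, hp, hplim⟩ := hlim
  clear hinf
  have hln1 : ∀ n : ℕ, 1 ≤ n → (1:ℝ) ≤ l n := by
    intro n hn; rw [← hl1]; exact hlmono hn
  have hlen : ∀ n : ℕ, 1 ≤ n → l n ≤ (n:ℝ) := by
    intro n hn
    induction n, hn using Nat.le_induction with
    | base => simp [hl1]
    | succ n hn ih =>
        have := hlstep n
        push_cast
        linarith
  -- two-sided linear bounds for f far out
  obtain ⟨M, hM1, hMb⟩ : ∃ M : ℝ, 1 ≤ M ∧ ∀ v : ℝ, M ≤ v → p/2 * v ≤ f v ∧ f v ≤ 2*p*v := by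
    have h := hplim.eventually (Ioo_mem_nhds (show p/2 < p by linarith)
      (show p < 2*p by linarith))
    rw [eventually_atTop] at h
    obtain ⟨M0, hM0⟩ := h
    refine ⟨max 1 M0, le_max_left _ _, ?_⟩
    intro v hv
    have hv1 : (1:ℝ) ≤ v := le_trans (le_max_left _ _) hv
    have hv0 : (0:ℝ) < v := by linarith
    obtain ⟨ha, hb⟩ := hM0 v (le_trans (le_max_right _ _) hv)
    exact ⟨le_of_lt ((lt_div_iff₀ hv0).mp ha), le_of_lt ((div_lt_iff₀ hv0).mp hb)⟩
  intro ξ hξ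
  have hK := hconv ξ hξ
  -- structure of Iseg
  have hIseg : ∀ n : ℕ, 1 ≤ n → Iseg l n = Finset.Icc (⌈(n:ℝ) - l n + 1⌉₊) n := by
    intro n hn
    ext t
    simp only [Iseg, Finset.mem_filter, Finset.mem_Icc, Nat.ceil_le]
    constructor
    · rintro ⟨⟨h1, h2⟩, h3⟩; exact ⟨h3, h2⟩
    · rintro ⟨h1, h2⟩
      have hx : (1:ℝ) ≤ (n:ℝ) - l n + 1 := by have := hlen n hn; linarith
      have ht1 : (1:ℝ) ≤ (t:ℝ) := le_trans hx h1
      exact ⟨⟨by exact_mod_cast ht1, h2⟩, h1⟩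
  -- Step 3 : card of bad set in window is small relative to l n
  have step3 : ∀ ε : ℝ, 0 < ε → ∃ m : ℕ, 1 ≤ m ∧ ∀ n, m ≤ n →
      ((((Iseg l n).filter (fun t => ξ ≤ ‖x t - L‖)).card : ℕ) : ℝ) ≤ ε * l n := by
    intro ε hε
    have e1 : ∀ᶠ n in atTop, M ≤ l n := hltop.eventually_ge_atTop M
    have e2 : ∀ᶠ n in atTop,
        f (((Iseg l n).filter (fun t => ξ ≤ ‖x t - L‖)).card) / f (l n) < ε/4 :=
      hK.eventually_lt_const (by positivity)
    have e3 : ∀ᶠ n in atTop, M / ε ≤ l n := hltop.eventually_ge_atTop _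
    obtain ⟨N, hN⟩ := eventually_atTop.mp ((e1.and e2).and e3)
    refine ⟨max 1 N, le_max_left _ _, ?_⟩
    intro n hn
    obtain ⟨⟨h1, h2⟩, h3⟩ := hN n (le_trans (le_max_right _ _) hn)
    set Kn : ℝ := (((Iseg l n).filter (fun t => ξ ≤ ‖x t - L‖)).card : ℝ) with hKn
    have hfl_lb := (hMb (l n) h1).1
    have hfl_ub := (hMb (l n) h1).2
    have hlnpos := hlpos n
    have hflpos : 0 < f (l n) := lt_of_lt_of_le (by positivity) hfl_lb
    have hfK : f Kn < ε/4 * f (l n) := (div_lt_iff₀ hflpos).mp h2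
    by_cases hc : Kn < M
    · have hMε : M ≤ ε * l n := by
        rw [div_le_iff₀ hε] at h3
        linarith [mul_comm (l n) ε]
      linarith
    · push_neg at hc
      have h5 := (hMb Kn hc).1
      have h6 : ε/4 * f (l n) ≤ ε/4 * (2*p*l n) :=
        mul_le_mul_of_nonneg_left hfl_ub (by positivity)
      nlinarith
  -- Step 4 : covering argument, global density bound
  have step4 : ∀ ε : ℝ, 0 < ε → ∃ m : ℕ, ∀ u : ℕ,
      ((((Finset.Icc 1 u).filter (fun t => ξ ≤ ‖x t - L‖)).card : ℕ) : ℝ) ≤ m + 2*ε*u := by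
    intro ε hε
    obtain ⟨m, hm1, hmb⟩ := step3 ε hε
    refine ⟨m, ?_⟩
    intro u
    induction u using Nat.strong_induction_on with
    | _ u ih =>
      by_cases hu : u < m
      · have h1 : ((Finset.Icc 1 u).filter (fun t => ξ ≤ ‖x t - L‖)).card ≤ u := by
          have := Finset.card_filter_le (Finset.Icc 1 u) (fun t => ξ ≤ ‖x t - L‖)
          simpa [Nat.card_Icc] using this
        have h2 : ((((Finset.Icc 1 u).filter (fun t => ξ ≤ ‖x t - L‖)).card : ℕ) : ℝ) ≤ u := by
          exact_mod_cast h1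
        have h3 : (u:ℝ) ≤ m := by exact_mod_cast hu.le
        have h4 : (0:ℝ) ≤ 2*ε*u := by positivity
        linarith
      · push_neg at hu
        have hu1 : 1 ≤ u := le_trans hm1 hu
        set s := ⌈(u:ℝ) - l u + 1⌉₊ with hs
        have hx1 : (1:ℝ) ≤ (u:ℝ) - l u + 1 := by have := hlen u hu1; linarith
        have hs1 : 1 ≤ s := Nat.one_le_ceil_iff.mpr (by linarith)
        have hsu : s ≤ u := Nat.ceil_le.mpr (by have := hln1 u hu1; push_cast; linarith)
        have hsr : (s:ℝ) < (u:ℝ) - l u + 2 := by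
          have := Nat.ceil_lt_add_one (show (0:ℝ) ≤ (u:ℝ) - l u + 1 by linarith)
          rw [hs]; linarith
        have hcov : ((Finset.Icc 1 u).filter (fun t => ξ ≤ ‖x t - L‖)).card ≤
            ((Finset.Icc 1 (s-1)).filter (fun t => ξ ≤ ‖x t - L‖)).card +
            ((Iseg l u).filter (fun t => ξ ≤ ‖x t - L‖)).card := by
          have hsubset : (Finset.Icc 1 u).filter (fun t => ξ ≤ ‖x t - L‖) ⊆
              (Finset.Icc 1 (s-1)).filter (fun t => ξ ≤ ‖x t - L‖) ∪
              (Iseg l u).filter (fun t => ξ ≤ ‖x t - L‖) := by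
            rw [hIseg u hu1, ← hs]
            intro t ht
            simp only [Finset.mem_filter, Finset.mem_Icc, Finset.mem_union] at ht ⊢
            obtain ⟨⟨ht1, ht2⟩, ht3⟩ := ht
            by_cases hts : t ≤ s - 1
            · exact Or.inl ⟨⟨ht1, hts⟩, ht3⟩
            · push_neg at hts
              exact Or.inr ⟨⟨by omega, ht2⟩, ht3⟩
          calc ((Finset.Icc 1 u).filter (fun t => ξ ≤ ‖x t - L‖)).card
              ≤ _ := Finset.card_le_card hsubset
            _ ≤ _ := Finset.card_union_le _ _
        have hprev : s - 1 < u := by omega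
        have ih1 := ih (s-1) hprev
        have hKu := hmb u hu
        have hcast : ((s-1:ℕ):ℝ) = (s:ℝ) - 1 := by
          have := Nat.cast_sub hs1 (R := ℝ); simpa using this
        rw [hcast] at ih1
        have hsur : (s:ℝ) ≤ u := by exact_mod_cast hsu
        have hwin : l u - 1 ≤ (u:ℝ) - s + 1 := by linarith
        have hwin1 : (1:ℝ) ≤ (u:ℝ) - s + 1 := by linarith
        have hkey : l u ≤ 2*((u:ℝ) - s + 1) := by linarith
        have hφr : ((((Finset.Icc 1 u).filter (fun t => ξ ≤ ‖x t - L‖)).card : ℕ) : ℝ) ≤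
            ((((Finset.Icc 1 (s-1)).filter (fun t => ξ ≤ ‖x t - L‖)).card : ℕ) : ℝ) +
            ((((Iseg l u).filter (fun t => ξ ≤ ‖x t - L‖)).card : ℕ) : ℝ) := by
          exact_mod_cast hcov
        have hεl : ε * l u ≤ ε * (2*((u:ℝ) - s + 1)) := mul_le_mul_of_nonneg_left hkey hε.le
        nlinarith
  -- Step 5 : conclude
  rw [Metric.tendsto_atTop]
  intro η hη
  obtain ⟨m, hmb⟩ := step4 (η/32) (by positivity)
  set C := max M (16*(M+(m:ℝ))/η) with hC
  refine ⟨max 1 ⌈C⌉₊, ?_⟩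
  intro u hu
  have hu1 : 1 ≤ u := le_trans (le_max_left _ _) hu
  have huC : C ≤ (u:ℝ) := by
    have h1 : ⌈C⌉₊ ≤ u := le_trans (le_max_right _ _) hu
    exact le_trans (Nat.le_ceil C) (by exact_mod_cast h1)
  have huM : M ≤ (u:ℝ) := le_trans (le_max_left _ _) huC
  have huB : 16*(M+(m:ℝ))/η ≤ (u:ℝ) := le_trans (le_max_right _ _) huC
  have hu0 : (0:ℝ) < u := by
    have : (1:ℝ) ≤ (u:ℝ) := by exact_mod_cast hu1
    linarith
  have hfu := hMb (u:ℝ) huM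
  have hfupos : 0 < f u := lt_of_lt_of_le (by positivity) hfu.1
  have hm0 : (0:ℝ) ≤ (m:ℝ) := Nat.cast_nonneg m
  have hφb := hmb u
  have harg : (0:ℝ) ≤ ((((Finset.Icc 1 u).filter (fun t => ξ ≤ ‖x t - L‖)).card : ℕ) : ℝ) :=
    Nat.cast_nonneg _
  have hargle : ((((Finset.Icc 1 u).filter (fun t => ξ ≤ ‖x t - L‖)).card : ℕ) : ℝ) ≤
      M + m + 2*(η/32)*u := by linarith
  have hmono1 : f ((((Finset.Icc 1 u).filter (fun t => ξ ≤ ‖x t - L‖)).card : ℕ) : ℝ) ≤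
      f (M + m + 2*(η/32)*u) := hmono _ _ harg hargle
  have hMarg : M ≤ M + m + 2*(η/32)*u := by
    have : (0:ℝ) ≤ 2*(η/32)*u := by positivity
    linarith
  have hup := (hMb _ hMarg).2
  have hηu : 16*(M+(m:ℝ)) ≤ η * u := by
    rw [div_le_iff₀ hη] at huB
    linarith [mul_comm (u:ℝ) η]
  rw [Real.dist_eq, sub_zero, abs_of_nonneg (div_nonneg (hf0 _ harg) hfupos.le),
    div_lt_iff₀ hfupos]
  have hflow : η * (p/2 * u) ≤ η * f u := mul_le_mul_of_nonneg_left hfu.1 hη.le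
  nlinarith [mul_pos hp (show (0:ℝ) < M + (m:ℝ) by linarith),
    mul_le_mul_of_nonneg_left hηu hp.le]
end

section
/- Let f be an unbounded modulus and λ ∈ Λ such that lim_{n→∞} f(n − λ_n + 1)/f(n) = 0 and lim_{n→∞} f(n)/f(λ_n) = 1. Then every f-statistically convergent real sequence is f_λ-statistically convergent to the same limit. -/
open Filter Finset Topology
open scoped Classical

theorem stmt12 (f : ℝ → ℝ) (hf : IsUnboundedModulus f)
    (l : ℕ → ℝ) (hl : MemLambda l)
    (h1 : Tendsto (fun n : ℕ => f ((n : ℝ) - l n + 1) / f (n : ℝ)) atTop (nhds 0))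
    (h2 : Tendsto (fun n : ℕ => f (n : ℝ) / f (l n)) atTop (nhds 1))
    (x : ℕ → ℝ) (L : ℝ) (hconv : FStatConv f x L) :
    FLStatConv f l x L := by
  obtain ⟨⟨hf0, hfz, hfsub, hmono, hcont⟩, hub⟩ := hf
  obtain ⟨hl1, hlm, hl2, hlpos, hlt⟩ := hl
  have hfl : ∀ n, 0 < f (l n) := fun n =>
    lt_of_le_of_ne (hf0 _ (hlpos n).le)
      (fun h => (hlpos n).ne' ((hfz _ (hlpos n).le).mp h.symm))
  intro ξ hξ
  have key := (hconv ξ hξ).mul h2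
  rw [zero_mul] at key
  apply tendsto_of_tendsto_of_tendsto_of_le_of_le' tendsto_const_nhds key
  · exact Eventually.of_forall fun n =>
      div_nonneg (hf0 _ (Nat.cast_nonneg _)) (hfl n).le
  · filter_upwards [eventually_ge_atTop 1] with n hn
    have hn0 : (0:ℝ) < (n:ℝ) := by exact_mod_cast Nat.lt_of_lt_of_le Nat.zero_lt_one hn
    have hfn : 0 < f (n:ℝ) := lt_of_le_of_ne (hf0 _ hn0.le)
      (fun h => hn0.ne' ((hfz _ hn0.le).mp h.symm))
    have hsub : ((Iseg l n).filter (fun t => ξ ≤ ‖x t - L‖)) ⊆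
        ((Finset.Icc 1 n).filter (fun t => ξ ≤ ‖x t - L‖)) :=
      Finset.filter_subset_filter _ (Finset.filter_subset _ _)
    have hcard : ((((Iseg l n).filter (fun t => ξ ≤ ‖x t - L‖)).card : ℝ)) ≤
        (((Finset.Icc 1 n).filter (fun t => ξ ≤ ‖x t - L‖)).card : ℝ) := by
      exact_mod_cast Finset.card_le_card hsub
    have hmf := hmono _ _ (Nat.cast_nonneg _) hcard
    have : f (((Iseg l n).filter (fun t => ξ ≤ ‖x t - L‖)).card) / f (l n) ≤
        f (((Finset.Icc 1 n).filter (fun t => ξ ≤ ‖x t - L‖)).card) / f (l n) :=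
      by gcongr <;> exact (hfl n).le
    refine this.trans_eq ?_
    field_simp
end

section
/- Let f be an unbounded modulus and λ = (λ_n), μ = (μ_n) ∈ Λ with λ_n ≤ μ_n for all n ≥ n_0. If liminf_{n→∞} f(λ_n)/f(μ_n) > 0, then every sequence that is f_μ-statistically convergent to L is f_λ-statistically convergent to L; i.e. S_{f_μ} ⊆ S_{f_λ}. -/
open Filter Finset Topology
open scoped Classical

theorem stmt13 (f : ℝ → ℝ) (hf : IsUnboundedModulus f)
    (l m : ℕ → ℝ) (hl : MemLambda l) (hm : MemLambda m)
    (n0 : ℕ) (hle : ∀ n ≥ n0, l n ≤ m n)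
    (hinf : 0 < Filter.atTop.liminf (fun n : ℕ => f (l n) / f (m n)))
    (x : ℕ → ℝ) (L : ℝ) (hconv : FLStatConv f m x L) :
    FLStatConv f l x L := by
  intro ξ hξ
  obtain ⟨⟨hnn, hzero, hsub, hmono, hcont⟩, hub⟩ := hf
  have hfl : ∀ n : ℕ, 0 < f (l n) := fun n => by
    have h0 := hl.2.2.2.1 n
    rcases lt_or_eq_of_le (hnn (l n) h0.le) with h | h
    · exact h
    · exact absurd ((hzero (l n) h0.le).mp h.symm) h0.ne'
  have hfm : ∀ n : ℕ, 0 < f (m n) := fun n => by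
    have h0 := hm.2.2.2.1 n
    rcases lt_or_eq_of_le (hnn (m n) h0.le) with h | h
    · exact h
    · exact absurd ((hzero (m n) h0.le).mp h.symm) h0.ne'
  set c := Filter.atTop.liminf (fun n : ℕ => f (l n) / f (m n)) with hc
  have hratio : ∀ᶠ n : ℕ in atTop, c / 2 < f (l n) / f (m n) := by
    have hbdd : Filter.IsBoundedUnder (· ≥ ·) atTop (fun n : ℕ => f (l n) / f (m n)) :=
      Filter.isBoundedUnder_of ⟨0, fun n => div_nonneg (hfl n).le (hfm n).le⟩
    exact Filter.eventually_lt_of_lt_liminf (by linarith) hbdd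
  have hg := hconv ξ hξ
  refine tendsto_of_tendsto_of_tendsto_of_le_of_le'
    (tendsto_const_nhds : Tendsto (fun _ : ℕ => (0:ℝ)) atTop (nhds 0))
    (show Tendsto (fun n => (2 / c) * (f (((Iseg m n).filter (fun t => ξ ≤ ‖x t - L‖)).card) / f (m n))) atTop (nhds 0) by
      simpa using hg.const_mul (2 / c)) ?_ ?_
  · exact Filter.Eventually.of_forall fun n =>
      div_nonneg (hnn _ (Nat.cast_nonneg _)) (hfl n).le
  · filter_upwards [hratio, Filter.eventually_ge_atTop n0] with n hr hn
    set A := (f (((Iseg l n).filter (fun t => ξ ≤ ‖x t - L‖)).card)) with hA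
    set B := (f (((Iseg m n).filter (fun t => ξ ≤ ‖x t - L‖)).card)) with hB
    have hsubI : (Iseg l n).filter (fun t => ξ ≤ ‖x t - L‖) ⊆
        (Iseg m n).filter (fun t => ξ ≤ ‖x t - L‖) := by
      apply Finset.filter_subset_filter
      intro t ht
      simp only [Iseg, Finset.mem_filter] at ht ⊢
      exact ⟨ht.1, by have := hle n hn; linarith [ht.2]⟩
    have hAB : A ≤ B :=
      hmono _ _ (Nat.cast_nonneg _) (by exact_mod_cast Finset.card_le_card hsubI)
    have hAnn : 0 ≤ A := hnn _ (Nat.cast_nonneg _)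
    have hcm : c * f (m n) < 2 * f (l n) := by
      have := (div_lt_div_iff₀ (by norm_num : (0:ℝ) < 2) (hfm n)).mp hr
      linarith
    have hcpos : 0 < c := hinf
    have h2 : (2 / c) * (B / f (m n)) = (2 * B) / (c * f (m n)) := by ring
    rw [h2, div_le_div_iff₀ (hfl n) (mul_pos hcpos (hfm n))]
    have hBnn : 0 ≤ B := hnn _ (Nat.cast_nonneg _)
    nlinarith [mul_le_mul hAB hcm.le (mul_nonneg hcpos.le (hfm n).le) hBnn]
end

section
/- Let f be an unbounded modulus and λ, μ ∈ Λ with λ_n ≤ μ_n for all n ≥ n_0 and lim_{n→∞} f(μ_n)/f(λ_n) = 1 and lim_{n→∞} f(μ_n − λ_n)/f(μ_n) = 0. Then every f_λ-statistically convergent sequence is f_μ-statistically convergent to the same limit, i.e. S_{f_λ} ⊆ S_{f_μ}. -/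
open Filter Finset Topology
open scoped Classical

theorem stmt14 (f : ℝ → ℝ) (hf : IsUnboundedModulus f)
    (l m : ℕ → ℝ) (hl : MemLambda l) (hm : MemLambda m)
    (n0 : ℕ) (hle : ∀ n ≥ n0, l n ≤ m n)
    (h1 : Tendsto (fun n : ℕ => f (m n) / f (l n)) atTop (nhds 1))
    (h2 : Tendsto (fun n : ℕ => f (m n - l n) / f (m n)) atTop (nhds 0))
    (x : ℕ → ℝ) (L : ℝ) (hconv : FLStatConv f l x L) :
    FLStatConv f m x L := by
  obtain ⟨⟨hf0, hfz, hfsub, hfmono, _⟩, hfunb⟩ := hf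
  obtain ⟨_, _, _, hlpos, _⟩ := hl
  obtain ⟨_, _, _, hmpos, hmtop⟩ := hm
  have hfpos : ∀ y : ℝ, 0 < y → 0 < f y := fun y hy =>
    lt_of_le_of_ne (hf0 y hy.le) (fun h => hy.ne' ((hfz y hy.le).mp h.symm))
  have hfm_top : Tendsto (fun n => f (m n)) atTop atTop := by
    rw [tendsto_atTop_atTop]
    intro M
    obtain ⟨x0, hx0, hMx0⟩ := hfunb M
    obtain ⟨N, hN⟩ := (tendsto_atTop_atTop.mp hmtop) x0
    exact ⟨N, fun n hn => le_trans hMx0.le (hfmono x0 (m n) hx0 (hN n hn))⟩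
  have hflm : Tendsto (fun n => f (l n) / f (m n)) atTop (nhds 1) := by
    have := h1.inv₀ one_ne_zero
    simpa [inv_div] using this
  -- bound on the cardinality of the difference of segments
  have cardD : ∀ n : ℕ, l n ≤ m n →
      ((Iseg m n \ Iseg l n).card : ℝ) ≤ m n - l n + 1 := by
    intro n h
    set c : ℕ := ⌈(n : ℝ) - m n + 1⌉₊ with hc
    set d : ℕ := ⌈(n : ℝ) - l n + 1⌉₊ with hd
    have hsub : Iseg m n \ Iseg l n ⊆ Finset.Ico c d := by
      intro t ht
      rw [Finset.mem_sdiff] at ht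
      obtain ⟨htm, htl⟩ := ht
      rw [Iseg, Finset.mem_filter] at htm htl
      push_neg at htl
      have h1t : c ≤ t := Nat.ceil_le.mpr htm.2
      have h2t : t < d := Nat.lt_ceil.mpr (htl htm.1)
      exact Finset.mem_Ico.mpr ⟨h1t, h2t⟩
    have hcard : (Iseg m n \ Iseg l n).card ≤ d - c :=
      (Finset.card_le_card hsub).trans (by rw [Nat.card_Ico])
    by_cases hdc : d ≤ c
    · have : (Iseg m n \ Iseg l n).card = 0 := by omega
      rw [this]
      push_cast
      linarith
    · push_neg at hdc
      have hd1 : 1 ≤ d := by omega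
      have ha : (0 : ℝ) ≤ (n : ℝ) - l n + 1 := by
        by_contra hcon
        push_neg at hcon
        have : d = 0 := Nat.ceil_eq_zero.mpr hcon.le
        omega
      have hdlt : (d : ℝ) < ((n : ℝ) - l n + 1) + 1 := Nat.ceil_lt_add_one ha
      have hcge : (n : ℝ) - m n + 1 ≤ (c : ℝ) := Nat.le_ceil _
      have : ((Iseg m n \ Iseg l n).card : ℝ) ≤ (d : ℝ) - (c : ℝ) := by
        have := hcard
        have h' : ((Iseg m n \ Iseg l n).card : ℝ) ≤ ((d - c : ℕ) : ℝ) :=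
          Nat.cast_le.mpr this
        rwa [Nat.cast_sub hdc.le] at h'
      linarith
  intro ξ hξ
  have hB := hconv ξ hξ
  have hf1 : Tendsto (fun n : ℕ => f 1 / f (m n)) atTop (nhds 0) :=
    tendsto_const_nhds.div_atTop hfm_top
  have hup : Tendsto (fun n =>
      (f (((Iseg l n).filter (fun t => ξ ≤ ‖x t - L‖)).card) / f (l n)) * (f (l n) / f (m n))
        + f (m n - l n) / f (m n) + f 1 / f (m n)) atTop (nhds 0) := by
    have := ((hB.mul hflm).add h2).add hf1
    simpa using this
  apply tendsto_of_tendsto_of_tendsto_of_le_of_le' tendsto_const_nhds hup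
  · filter_upwards with n
    exact div_nonneg (hf0 _ (Nat.cast_nonneg _)) (hf0 _ (hmpos n).le)
  · filter_upwards [eventually_ge_atTop n0] with n hn
    have hlm : l n ≤ m n := hle n hn
    set P : ℕ → Prop := fun t => ξ ≤ ‖x t - L‖ with hP
    set A := (Iseg m n).filter P with hA
    set B := (Iseg l n).filter P with hBdef
    set D := Iseg m n \ Iseg l n with hD
    have hsub : A ⊆ B ∪ D := by
      intro t ht
      rw [hA, Finset.mem_filter] at ht
      rw [Finset.mem_union]
      by_cases h : t ∈ Iseg l n
      · exact Or.inl (Finset.mem_filter.mpr ⟨h, ht.2⟩)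
      · exact Or.inr (Finset.mem_sdiff.mpr ⟨ht.1, h⟩)
    have hcardA : A.card ≤ B.card + D.card :=
      (Finset.card_le_card hsub).trans (Finset.card_union_le _ _)
    have hml0 : (0 : ℝ) ≤ m n - l n := by linarith
    have hfm : 0 < f (m n) := hfpos _ (hmpos n)
    have hfl : 0 < f (l n) := hfpos _ (hlpos n)
    -- chain of inequalities on f of cardinalities
    have e1 : f A.card ≤ f B.card + f D.card := by
      have h1' : f A.card ≤ f ((B.card : ℝ) + (D.card : ℝ)) := by
        apply hfmono _ _ (Nat.cast_nonneg _)
        exact_mod_cast hcardA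
      exact h1'.trans (hfsub _ (Nat.cast_nonneg _) _ (Nat.cast_nonneg _))
    have e2 : f D.card ≤ f (m n - l n) + f 1 := by
      have h1' : f D.card ≤ f ((m n - l n) + 1) :=
        hfmono _ _ (Nat.cast_nonneg _) (cardD n hlm)
      exact h1'.trans (hfsub _ hml0 _ zero_le_one)
    have e3 : f A.card ≤ f B.card + f (m n - l n) + f 1 := by linarith
    have e4 : f A.card / f (m n) ≤
        (f B.card + f (m n - l n) + f 1) / f (m n) :=
      div_le_div_of_nonneg_right e3 hfm.le
    have e5 : (f B.card + f (m n - l n) + f 1) / f (m n)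
        = (f B.card / f (l n)) * (f (l n) / f (m n))
          + f (m n - l n) / f (m n) + f 1 / f (m n) := by
      rw [div_mul_div_comm, mul_comm (f (l n)) (f (m n)), mul_div_mul_right _ _ hfl.ne']
      ring
    calc f A.card / f (m n) ≤ _ := e4
      _ = _ := e5
end

section
/- Let f be an unbounded modulus with a constant c > 0 such that f(xy) ≥ c·f(x)·f(y) for all x,y ≥ 0, and let λ, μ ∈ Λ with λ_n ≤ μ_n for all n ≥ n_0 and liminf_{n→∞} f(λ_n)/f(μ_n) > 0. If a real sequence (x_t) is strongly f_μ-summable to L, i.e. lim_n (1/f(μ_n)) Σ_{t∈J_n} f(|x_t − L|) = 0, then (x_t) is f_λ-statistically convergent to L. -/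
open Filter Finset Topology
open scoped Classical

lemma mod_nat_le (f : ℝ → ℝ) (hf : IsModulus f) (k : ℕ) : f k ≤ k * f 1 := by
  obtain ⟨h0, hz, hsub, hmono, _⟩ := hf
  induction k with
  | zero => simp [(hz 0 le_rfl).mpr rfl]
  | succ k ih =>
    have h := hsub k (by positivity) 1 zero_le_one
    push_cast
    calc f ((k : ℝ) + 1) ≤ f k + f 1 := h
      _ ≤ k * f 1 + f 1 := by linarith
      _ = ((k : ℝ) + 1) * f 1 := by ring

theorem stmt15 (f : ℝ → ℝ) (hf : IsUnboundedModulus f)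
    (c : ℝ) (hc : 0 < c) (hmul : ∀ x, 0 ≤ x → ∀ y, 0 ≤ y → c * (f x * f y) ≤ f (x * y))
    (l m : ℕ → ℝ) (hl : MemLambda l) (hm : MemLambda m)
    (n0 : ℕ) (hle : ∀ n ≥ n0, l n ≤ m n)
    (hinf : 0 < Filter.atTop.liminf (fun n : ℕ => f (l n) / f (m n)))
    (x : ℕ → ℝ) (L : ℝ)
    (hsum : Tendsto (fun n => (1 / f (m n)) * ∑ t ∈ Iseg m n, f (|x t - L|)) atTop (nhds 0)) :
    FLStatConv f l x L := by
  obtain ⟨hmod, -⟩ := hf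
  have hmod' := hmod
  obtain ⟨h0, hz, hsub, hmono, -⟩ := hmod'
  have hlpos := hl.2.2.2.1
  have hmpos := hm.2.2.2.1
  have hflpos : ∀ n, 0 < f (l n) := fun n =>
    lt_of_le_of_ne (h0 _ (hlpos n).le) fun h => (hlpos n).ne' ((hz _ (hlpos n).le).mp h.symm)
  have hfmpos : ∀ n, 0 < f (m n) := fun n =>
    lt_of_le_of_ne (h0 _ (hmpos n).le) fun h => (hmpos n).ne' ((hz _ (hmpos n).le).mp h.symm)
  have hf1 : 0 < f 1 :=
    lt_of_le_of_ne (h0 1 zero_le_one) fun h => one_ne_zero ((hz 1 zero_le_one).mp h.symm)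
  intro ξ hξ
  have hfξ : 0 < f ξ :=
    lt_of_le_of_ne (h0 ξ hξ.le) fun h => hξ.ne' ((hz ξ hξ.le).mp h.symm)
  set δ := atTop.liminf (fun n : ℕ => f (l n) / f (m n)) / 2 with hδdef
  have hδpos : 0 < δ := by positivity
  have hbdd : IsBoundedUnder (· ≥ ·) atTop (fun n : ℕ => f (l n) / f (m n)) := by
    refine isBoundedUnder_of ⟨0, fun n => ?_⟩
    exact div_nonneg (hflpos n).le (hfmpos n).le
  have hδev : ∀ᶠ n : ℕ in atTop, δ < f (l n) / f (m n) :=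
    eventually_lt_of_lt_liminf (by simpa [hδdef] using half_lt_self hinf) hbdd
  set C := f 1 / (f ξ * δ) with hCdef
  have hCpos : 0 < C := by positivity
  have key : ∀ᶠ n : ℕ in atTop,
      f (((Iseg l n).filter (fun t => ξ ≤ ‖x t - L‖)).card) / f (l n) ≤
        C * ((1 / f (m n)) * ∑ t ∈ Iseg m n, f (|x t - L|)) := by
    filter_upwards [hδev, eventually_ge_atTop n0] with n hδn hn
    set S := ∑ t ∈ Iseg m n, f (|x t - L|) with hS
    set k := ((Iseg l n).filter (fun t => ξ ≤ ‖x t - L‖)).card with hk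
    have hsubset : (Iseg l n).filter (fun t => ξ ≤ ‖x t - L‖) ⊆ Iseg m n := by
      intro t ht
      simp only [Iseg, Finset.mem_filter] at ht ⊢
      refine ⟨ht.1.1, ?_⟩
      have := hle n hn
      linarith [ht.1.2]
    have hcount : (k : ℝ) * f ξ ≤ S := by
      have h1 : (k : ℝ) * f ξ = ∑ t ∈ (Iseg l n).filter (fun t => ξ ≤ ‖x t - L‖), f ξ := by
        rw [Finset.sum_const, nsmul_eq_mul, hk]
      rw [h1]
      calc ∑ t ∈ (Iseg l n).filter (fun t => ξ ≤ ‖x t - L‖), f ξ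
          ≤ ∑ t ∈ (Iseg l n).filter (fun t => ξ ≤ ‖x t - L‖), f (|x t - L|) :=
            Finset.sum_le_sum fun t ht => hmono ξ _ hξ.le
              (by simpa [Real.norm_eq_abs] using (Finset.mem_filter.mp ht).2)
        _ ≤ S := Finset.sum_le_sum_of_subset_of_nonneg hsubset
            (fun t _ _ => h0 _ (abs_nonneg _))
    have hSnn : 0 ≤ S := Finset.sum_nonneg fun t _ => h0 _ (abs_nonneg _)
    have hfk : f k ≤ (f 1 / f ξ) * S := by
      calc f k ≤ (k : ℝ) * f 1 := mod_nat_le f hmod k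
        _ ≤ (S / f ξ) * f 1 := by
            have : (k : ℝ) ≤ S / f ξ := (le_div_iff₀ hfξ).mpr hcount
            nlinarith
        _ = (f 1 / f ξ) * S := by ring
    have hlm : δ * f (m n) ≤ f (l n) := by
      nlinarith [(lt_div_iff₀ (hfmpos n)).mp hδn]
    calc f k / f (l n) ≤ ((f 1 / f ξ) * S) / (δ * f (m n)) :=
          div_le_div₀ (mul_nonneg (by positivity) hSnn) hfk (mul_pos hδpos (hfmpos n)) hlm
      _ = C * ((1 / f (m n)) * S) := by
          rw [hCdef]
          field_simp
  have hnn : ∀ᶠ n : ℕ in atTop,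
      0 ≤ f (((Iseg l n).filter (fun t => ξ ≤ ‖x t - L‖)).card) / f (l n) :=
    Eventually.of_forall fun n => div_nonneg (h0 _ (Nat.cast_nonneg _)) (hflpos n).le
  have hten : Tendsto (fun n => C * ((1 / f (m n)) * ∑ t ∈ Iseg m n, f (|x t - L|)))
      atTop (nhds 0) := by
    simpa using hsum.const_mul C
  exact squeeze_zero' hnn key hten
end

section
/- For every infinite set B ⊆ ℕ there exists an unbounded modulus function f such that the f-density of B equals one, i.e. lim_{u→∞} f(|B ∩ {1,...,u}|)/f(u) = 1. -/
open Filter Finset Topology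
open scoped Classical

set_option maxHeartbeats 1000000

namespace S16

variable (b : ℕ → ℕ) (hb : Tendsto b atTop atTop)

noncomputable def thr (c : ℕ) : ℕ :=
  (eventually_atTop.mp (hb.eventually_ge_atTop c)).choose

lemma thr_spec (c : ℕ) : ∀ u, thr b hb c ≤ u → c ≤ b u :=
  (eventually_atTop.mp (hb.eventually_ge_atTop c)).choose_spec

noncomputable def seq : ℕ → ℕ
  | 0 => 1
  | k+1 => max (2 * seq k) (thr b hb (seq k))

lemma seq_zero : seq b hb 0 = 1 := rfl

lemma two_mul_seq_le (k : ℕ) : 2 * seq b hb k ≤ seq b hb (k+1) := le_max_left _ _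

lemma seq_pos (k : ℕ) : 0 < seq b hb k := by
  induction k with
  | zero => exact one_pos
  | succ k ih => exact lt_of_lt_of_le (by omega) (two_mul_seq_le b hb k)

lemma seq_lt_succ (k : ℕ) : seq b hb k < seq b hb (k+1) := by
  have := two_mul_seq_le b hb k
  have := seq_pos b hb k
  omega

lemma seq_mono : Monotone (seq b hb) :=
  monotone_nat_of_le_succ (fun k => (seq_lt_succ b hb k).le)

lemma two_pow_le_seq (k : ℕ) : 2 ^ k ≤ seq b hb k := by
  induction k with
  | zero => simp [seq_zero]
  | succ k ih =>
      calc 2 ^ (k+1) = 2 * 2 ^ k := by ring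
      _ ≤ 2 * seq b hb k := by omega
      _ ≤ _ := two_mul_seq_le b hb k

lemma pow_mul_seq_le (m j : ℕ) : 2 ^ j * seq b hb m ≤ seq b hb (m + j) := by
  induction j with
  | zero => simp
  | succ j ih =>
      calc 2 ^ (j+1) * seq b hb m = 2 * (2 ^ j * seq b hb m) := by ring
      _ ≤ 2 * seq b hb (m + j) := by omega
      _ ≤ _ := two_mul_seq_le b hb (m + j)

lemma b_ge (k u : ℕ) (hu : seq b hb (k+1) ≤ u) : seq b hb k ≤ b u :=
  thr_spec b hb _ u (le_trans (le_max_right _ _) hu)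

/-- the modulus function -/
noncomputable def F (x : ℝ) : ℝ := ∑' k, min (x / (seq b hb k : ℝ)) 1

lemma seq_cast_pos (k : ℕ) : (0:ℝ) < (seq b hb k : ℝ) := by
  exact_mod_cast seq_pos b hb k

lemma div_bound (x : ℝ) (hx : 0 ≤ x) (k : ℕ) :
    x / (seq b hb k : ℝ) ≤ x * (1/2) ^ k := by
  have h2 : (2:ℝ) ^ k ≤ (seq b hb k : ℝ) := by exact_mod_cast two_pow_le_seq b hb k
  have hpos : (0:ℝ) < (seq b hb k : ℝ) := seq_cast_pos b hb k
  rw [div_le_iff₀ hpos]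
  calc x = x * (1/2)^k * 2^k := by
        rw [mul_assoc]; norm_num [← mul_pow]
    _ ≤ x * (1/2)^k * (seq b hb k : ℝ) := by
        gcongr

lemma abs_term_le (x : ℝ) (k : ℕ) :
    |min (x / (seq b hb k : ℝ)) 1| ≤ |x| * (1/2) ^ k := by
  have h2 : (2:ℝ) ^ k ≤ (seq b hb k : ℝ) := by exact_mod_cast two_pow_le_seq b hb k
  have hpos : (0:ℝ) < (seq b hb k : ℝ) := seq_cast_pos b hb k
  have hdiv : |x / (seq b hb k : ℝ)| ≤ |x| * (1/2) ^ k := by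
    rw [abs_div, abs_of_pos hpos, div_le_iff₀ hpos]
    calc |x| = |x| * (1/2)^k * 2^k := by
          rw [mul_assoc]; norm_num [← mul_pow]
      _ ≤ |x| * (1/2)^k * (seq b hb k : ℝ) := by
          gcongr
  rcases le_total (x / (seq b hb k : ℝ)) 1 with h | h
  · rw [min_eq_left h]; exact hdiv
  · rw [min_eq_right h, abs_one]
    calc (1:ℝ) ≤ x / (seq b hb k : ℝ) := h
      _ ≤ |x / (seq b hb k : ℝ)| := le_abs_self _
      _ ≤ _ := hdiv

lemma summable_term (x : ℝ) : Summable (fun k => min (x / (seq b hb k : ℝ)) 1) := by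
  rw [← summable_abs_iff]
  apply Summable.of_nonneg_of_le (fun k => abs_nonneg _) (abs_term_le b hb x)
  exact (summable_geometric_of_lt_one (by norm_num) (by norm_num)).mul_left _

lemma F_nonneg (x : ℝ) (hx : 0 ≤ x) : 0 ≤ F b hb x := by
  apply tsum_nonneg
  intro k
  exact le_min (div_nonneg hx (seq_cast_pos b hb k).le) one_pos.le

lemma F_mono (x y : ℝ) (hx : 0 ≤ x) (hxy : x ≤ y) : F b hb x ≤ F b hb y := by
  apply Summable.tsum_le_tsum _ (summable_term b hb x) (summable_term b hb y)
  intro k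
  have hpos := seq_cast_pos b hb k
  exact min_le_min (by gcongr) le_rfl

lemma F_zero : F b hb 0 = 0 := by
  simp [F]

lemma F_subadd (x : ℝ) (hx : 0 ≤ x) (y : ℝ) (hy : 0 ≤ y) :
    F b hb (x + y) ≤ F b hb x + F b hb y := by
  rw [F, F, F, ← Summable.tsum_add (summable_term b hb x) (summable_term b hb y)]
  apply Summable.tsum_le_tsum _ (summable_term b hb _)
    ((summable_term b hb x).add (summable_term b hb y))
  intro k
  have hpos := (seq_cast_pos b hb k)
  rcases le_total (x / (seq b hb k : ℝ)) 1 with h1 | h1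
  · rcases le_total (y / (seq b hb k : ℝ)) 1 with h2 | h2
    · rw [min_eq_left h1, min_eq_left h2]
      calc min ((x+y) / (seq b hb k : ℝ)) 1 ≤ (x+y) / (seq b hb k : ℝ) := min_le_left _ _
        _ = x / (seq b hb k : ℝ) + y / (seq b hb k : ℝ) := add_div x y _
    · calc min ((x+y) / (seq b hb k : ℝ)) 1 ≤ 1 := min_le_right _ _
        _ = 0 + 1 := by ring
        _ ≤ min (x / (seq b hb k : ℝ)) 1 + min (y / (seq b hb k : ℝ)) 1 := by
            rw [min_eq_right h2]
            gcongr
            exact le_min (div_nonneg hx hpos.le) one_pos.le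
  · calc min ((x+y) / (seq b hb k : ℝ)) 1 ≤ 1 := min_le_right _ _
      _ = 1 + 0 := by ring
      _ ≤ min (x / (seq b hb k : ℝ)) 1 + min (y / (seq b hb k : ℝ)) 1 := by
          rw [min_eq_right h1]
          gcongr
          exact le_min (div_nonneg hy hpos.le) one_pos.le

lemma F_le_two_mul (x : ℝ) (hx : 0 ≤ x) : F b hb x ≤ 2 * x := by
  have : F b hb x ≤ ∑' k : ℕ, x * (1/2)^k := by
    apply Summable.tsum_le_tsum _ (summable_term b hb x)
      ((summable_geometric_of_lt_one (by norm_num) (by norm_num)).mul_left _)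
    intro k
    calc min (x / (seq b hb k : ℝ)) 1 ≤ x / (seq b hb k : ℝ) := min_le_left _ _
      _ ≤ x * (1/2)^k := div_bound b hb x hx k
  calc F b hb x ≤ ∑' k : ℕ, x * (1/2)^k := this
    _ = x * 2 := by rw [tsum_mul_left, tsum_geometric_two]
    _ = 2 * x := by ring

lemma F_lower (m : ℕ) (x : ℝ) (hx : (seq b hb m : ℝ) ≤ x) : (m : ℝ) + 1 ≤ F b hb x := by
  have hx0 : (0:ℝ) ≤ x := le_trans (seq_cast_pos b hb m).le hx
  have key : ∀ k ∈ Finset.range (m+1), min (x / (seq b hb k : ℝ)) 1 = 1 := by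
    intro k hk
    rw [Finset.mem_range] at hk
    apply min_eq_right
    rw [le_div_iff₀ (seq_cast_pos b hb k), one_mul]
    calc (seq b hb k : ℝ) ≤ (seq b hb m : ℝ) := by
          exact_mod_cast seq_mono b hb (Nat.lt_succ_iff.mp hk)
      _ ≤ x := hx
  rw [F]
  calc (m:ℝ) + 1 = ∑ k ∈ Finset.range (m+1), min (x / (seq b hb k : ℝ)) 1 := by
        rw [Finset.sum_congr rfl key]; simp
    _ ≤ ∑' k, min (x / (seq b hb k : ℝ)) 1 :=
        Summable.sum_le_tsum _ (fun k _ => le_min (div_nonneg hx0 (seq_cast_pos b hb k).le) one_pos.le)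
        (summable_term b hb x)

lemma F_upper (m : ℕ) (x : ℝ) (hx0 : 0 ≤ x) (hx : x ≤ (seq b hb (m+1) : ℝ)) :
    F b hb x ≤ (m : ℝ) + 3 := by
  have hsum := summable_term b hb x
  rw [F, ← Summable.sum_add_tsum_nat_add (m+1) hsum]
  have h1 : ∑ k ∈ Finset.range (m+1), min (x / (seq b hb k : ℝ)) 1 ≤ (m:ℝ) + 1 := by
    calc ∑ k ∈ Finset.range (m+1), min (x / (seq b hb k : ℝ)) 1
        ≤ ∑ _k ∈ Finset.range (m+1), (1:ℝ) := Finset.sum_le_sum (fun k _ => min_le_right _ _)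
      _ = (m:ℝ) + 1 := by simp
  have h2 : ∑' j : ℕ, min (x / (seq b hb (j + (m+1)) : ℝ)) 1 ≤ 2 := by
    have hle : ∀ j : ℕ, min (x / (seq b hb (j + (m+1)) : ℝ)) 1 ≤ (1/2:ℝ)^j := by
      intro j
      have hseq : (2:ℝ)^j * (seq b hb (m+1) : ℝ) ≤ (seq b hb (m+1+j) : ℝ) := by
        exact_mod_cast pow_mul_seq_le b hb (m+1) j
      have hpos := seq_cast_pos b hb (j + (m+1))
      calc min (x / (seq b hb (j + (m+1)) : ℝ)) 1 ≤ x / (seq b hb (j + (m+1)) : ℝ) :=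
            min_le_left _ _
        _ ≤ (1/2:ℝ)^j := by
            rw [div_le_iff₀ hpos]
            have : (m+1+j) = (j + (m+1)) := by ring
            rw [this] at hseq
            calc x ≤ (seq b hb (m+1) : ℝ) := hx
              _ = (1/2:ℝ)^j * ((2:ℝ)^j * (seq b hb (m+1) : ℝ)) := by
                  rw [← mul_assoc]; norm_num [← mul_pow]
              _ ≤ (1/2:ℝ)^j * (seq b hb (j + (m+1)) : ℝ) := by
                  gcongr
    calc ∑' j : ℕ, min (x / (seq b hb (j + (m+1)) : ℝ)) 1 ≤ ∑' j : ℕ, (1/2:ℝ)^j :=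
          Summable.tsum_le_tsum hle ((summable_nat_add_iff (m+1)).mpr hsum)
            (summable_geometric_of_lt_one (by norm_num) (by norm_num))
      _ = 2 := tsum_geometric_two
  linarith

lemma F_tendsto_atTop : Tendsto (fun u : ℕ => F b hb u) atTop atTop := by
  rw [tendsto_atTop]
  intro C
  filter_upwards [eventually_ge_atTop (seq b hb ⌈C⌉₊)] with u hu
  calc C ≤ (⌈C⌉₊ : ℝ) := Nat.le_ceil C
    _ ≤ (⌈C⌉₊ : ℝ) + 1 := by linarith
    _ ≤ F b hb u := F_lower b hb ⌈C⌉₊ u (by exact_mod_cast hu)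

lemma key_ineq (u : ℕ) (hu : seq b hb 1 ≤ u) :
    F b hb u ≤ F b hb (b u) + 3 := by
  set m := Nat.findGreatest (fun m => seq b hb m ≤ u) u with hm
  have hu1 : 1 ≤ u := le_trans (seq_pos b hb 1) hu
  have hm1 : 1 ≤ m := Nat.le_findGreatest hu1 hu
  have hspec : seq b hb m ≤ u := by
    rw [hm]
    exact Nat.findGreatest_spec (P := fun k => seq b hb k ≤ u) (m := 1) hu1 hu
  have hnot : u < seq b hb (m+1) := by
    by_cases h : m + 1 ≤ u
    · by_contra hc
      exact Nat.findGreatest_is_greatest (P := fun k => seq b hb k ≤ u)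
        (by rw [hm] at *; exact Nat.lt_succ_self _) h (not_lt.mp hc)
    · push_neg at h
      calc u < m + 1 := h
        _ < 2 ^ (m+1) := Nat.lt_two_pow_self
        _ ≤ seq b hb (m+1) := two_pow_le_seq b hb (m+1)
  have hb_ge : seq b hb (m-1) ≤ b u := by
    apply b_ge b hb (m-1) u
    have h : m - 1 + 1 = m := by omega
    rwa [h]
  have hFu : F b hb u ≤ (m:ℝ) + 3 :=
    F_upper b hb m u (by positivity) (by exact_mod_cast hnot.le)
  have hFb : (m:ℝ) ≤ F b hb (b u) := by
    have := F_lower b hb (m-1) (b u) (by exact_mod_cast hb_ge)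
    have hcast : ((m-1 : ℕ) : ℝ) + 1 = (m:ℝ) := by
      have : m - 1 + 1 = m := Nat.succ_pred_eq_of_pos hm1
      exact_mod_cast congrArg (Nat.cast : ℕ → ℝ) this
    linarith [this, hcast.ge]
  linarith

lemma F_pos (x : ℝ) (hx : 0 < x) : 0 < F b hb x := by
  have hcast : ((seq b hb 0 : ℕ) : ℝ) = 1 := by rw [seq_zero]; norm_num
  have h0 : (0:ℝ) < min (x / (seq b hb 0 : ℝ)) 1 := by
    rw [hcast]
    exact lt_min (by simpa using hx) one_pos
  calc (0:ℝ) < min (x / (seq b hb 0 : ℝ)) 1 := h0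
    _ ≤ F b hb x := Summable.le_tsum (summable_term b hb x) 0
        (fun j _ => le_min (div_nonneg hx.le (seq_cast_pos b hb j).le) one_pos.le)

lemma F_eq_zero_iff (x : ℝ) (hx : 0 ≤ x) : F b hb x = 0 ↔ x = 0 := by
  constructor
  · intro h
    by_contra hx0
    have := F_pos b hb x (lt_of_le_of_ne hx (Ne.symm hx0))
    linarith
  · rintro rfl
    exact F_zero b hb

lemma F_continuousWithinAt : ContinuousWithinAt (F b hb) (Set.Ici 0) 0 := by
  have h0 : F b hb 0 = 0 := F_zero b hb
  rw [ContinuousWithinAt, h0]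
  apply squeeze_zero' (g := fun x => 2 * x)
  · filter_upwards [self_mem_nhdsWithin] with x hx
    exact F_nonneg b hb x hx
  · filter_upwards [self_mem_nhdsWithin] with x hx
    exact F_le_two_mul b hb x hx
  · have : Tendsto (fun x : ℝ => 2 * x) (𝓝 0) (𝓝 (2 * 0)) :=
      (continuous_const.mul continuous_id).tendsto 0
    simpa using this.mono_left nhdsWithin_le_nhds

lemma F_unbdd : ∀ M : ℝ, ∃ x, 0 ≤ x ∧ M < F b hb x := by
  intro M
  refine ⟨(seq b hb ⌈M⌉₊ : ℝ), by positivity, ?_⟩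
  have := F_lower b hb ⌈M⌉₊ (seq b hb ⌈M⌉₊ : ℝ) le_rfl
  have hM := Nat.le_ceil M
  linarith

lemma F_isUnboundedModulus : IsUnboundedModulus (F b hb) :=
  ⟨⟨F_nonneg b hb, F_eq_zero_iff b hb, F_subadd b hb,
    F_mono b hb, F_continuousWithinAt b hb⟩, F_unbdd b hb⟩

end S16


section Main

open S16

variable (B : Set ℕ)

noncomputable def cnt (u : ℕ) : ℕ := ((Finset.Icc 1 u).filter (fun t => t ∈ B)).card

lemma cnt_mono : Monotone (cnt B) := by
  intro u v huv
  apply Finset.card_le_card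
  apply Finset.filter_subset_filter
  exact Finset.Icc_subset_Icc_right huv

lemma cnt_le (u : ℕ) : cnt B u ≤ u := by
  calc cnt B u ≤ (Finset.Icc 1 u).card := Finset.card_le_card (Finset.filter_subset _ _)
    _ = u := by rw [Nat.card_Icc]; omega

lemma cnt_tendsto (hB : B.Infinite) : Tendsto (cnt B) atTop atTop := by
  apply tendsto_atTop_atTop_of_monotone (cnt_mono B)
  intro c
  obtain ⟨s, hsB, hcard⟩ := hB.exists_subset_card_eq (c+1)
  refine ⟨s.sup id, ?_⟩
  have hsub : s.erase 0 ⊆ (Finset.Icc 1 (s.sup id)).filter (fun t => t ∈ B) := by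
    intro t ht
    have ht0 : t ≠ 0 := Finset.ne_of_mem_erase ht
    have hts : t ∈ s := Finset.mem_of_mem_erase ht
    rw [Finset.mem_filter, Finset.mem_Icc]
    exact ⟨⟨Nat.one_le_iff_ne_zero.mpr ht0, Finset.le_sup (f := id) hts⟩, hsB hts⟩
  calc c = (c + 1) - 1 := by omega
    _ = s.card - 1 := by rw [hcard]
    _ ≤ (s.erase 0).card := Finset.pred_card_le_card_erase
    _ ≤ _ := Finset.card_le_card hsub

end Main



theorem stmt16 (B : Set ℕ) (hB : B.Infinite) :
    ∃ f : ℝ → ℝ, IsUnboundedModulus f ∧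
      Tendsto (fun u => f (((Finset.Icc 1 u).filter (fun t => t ∈ B)).card) / f (u : ℝ))
        atTop (nhds 1) := by
  have hb : Tendsto (cnt B) atTop atTop := cnt_tendsto B hB
  set b := cnt B with hbdef
  refine ⟨S16.F b hb, S16.F_isUnboundedModulus b hb, ?_⟩
  have hFtop : Tendsto (fun u : ℕ => S16.F b hb u) atTop atTop := S16.F_tendsto_atTop b hb
  have hdiv : Tendsto (fun u : ℕ => 1 - 3 / S16.F b hb u) atTop (𝓝 1) := by
    have h3 : Tendsto (fun u : ℕ => (3:ℝ) / S16.F b hb u) atTop (𝓝 0) :=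
      Tendsto.div_atTop tendsto_const_nhds hFtop
    simpa using (tendsto_const_nhds (x := (1:ℝ))).sub h3
  have hmain : Tendsto (fun u : ℕ => S16.F b hb (b u) / S16.F b hb u) atTop (𝓝 1) := by
    apply tendsto_of_tendsto_of_tendsto_of_le_of_le' hdiv tendsto_const_nhds
    · filter_upwards [eventually_ge_atTop (S16.seq b hb 1), eventually_ge_atTop 1]
        with u hu hu1
      have hFpos : (1:ℝ) ≤ S16.F b hb u := by
        have := S16.F_lower b hb 0 u (by
          rw [S16.seq_zero]; exact_mod_cast hu1)
        simpa using this
      have hkey := S16.key_ineq b hb u hu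
      have hFpos0 : (0:ℝ) < S16.F b hb u := by linarith
      calc 1 - 3 / S16.F b hb u = (S16.F b hb u - 3) / S16.F b hb u := by
            rw [sub_div, div_self (ne_of_gt hFpos0)]
        _ ≤ S16.F b hb (b u) / S16.F b hb u := by gcongr <;> linarith
    · filter_upwards [eventually_ge_atTop 1] with u hu1
      have hFpos : (1:ℝ) ≤ S16.F b hb u := by
        have := S16.F_lower b hb 0 u (by rw [S16.seq_zero]; exact_mod_cast hu1)
        simpa using this
      apply div_le_one_of_le₀
      · apply S16.F_mono b hb _ _ (by positivity)
        exact_mod_cast cnt_le B u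
      · linarith
  exact hmain
end

section
/- Let X be a normed space and (x_t) a sequence in X. If for every unbounded modulus f the f-statistical limit of (x_t) exists, then all these limits coincide with a single x ∈ X and (x_t) converges to x in the norm topology. -/
open Filter Finset Topology
open scoped Classical

section Concave
variable (b : ℕ → ℝ)

noncomputable def cfun (x : ℝ) : ℝ :=
  ⨅ j : ℕ, ((j : ℝ) + (x - b j) / (b (j + 1) - b j))

variable (hb0 : b 0 = 0) (hstep : ∀ j, b j + 1 ≤ b (j + 1) - b j)
variable (hbnn : ∀ j, 0 ≤ b j)

section
include hstep hbnn

lemma Gpos : ∀ j, (0:ℝ) < b (j+1) - b j := fun j =>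
  lt_of_lt_of_le (by linarith [hbnn j]) (hstep j)

lemma Gmono : Monotone (fun j => b (j+1) - b j) := by
  apply monotone_nat_of_le_succ
  intro j
  have h1 := hstep (j+1)
  have h2 := hbnn j
  show b (j+1) - b j ≤ b (j+1+1) - b (j+1)
  linarith

include hb0 in
lemma ble : ∀ j, b j ≤ j * (b (j+1) - b j) := by
  intro j
  induction j with
  | zero => simp [hb0]
  | succ n ih =>
    have hm : (b (n+1) - b n) ≤ (b (n+2) - b (n+1)) := Gmono b hstep hbnn (Nat.le_succ n)
    have : b (n+1) = b n + (b (n+1) - b n) := by ring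
    push_cast
    nlinarith [hbnn n, Gpos b hstep hbnn n, Gpos b hstep hbnn (n+1)]

lemma bgap : ∀ (j d : ℕ), (d:ℝ) * (b (j+1) - b j) ≤ b (j + d) - b j := by
  intro j d
  induction d with
  | zero => simp
  | succ n ih =>
    have hm : (b (j+1) - b j) ≤ (b (j + n + 1) - b (j + n)) := Gmono b hstep hbnn (by omega)
    have : j + (n+1) = (j + n) + 1 := by ring
    rw [this]
    push_cast
    linarith

include hb0 in
lemma c_nonneg : ∀ j : ℕ, (0:ℝ) ≤ (j:ℝ) - b j / (b (j+1) - b j) := by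
  intro j
  have hg := Gpos b hstep hbnn j
  have := ble b hb0 hstep hbnn j
  rw [sub_nonneg, div_le_iff₀ hg]
  linarith

lemma c_ge : ∀ j : ℕ, (j:ℝ) - 1 ≤ (j:ℝ) - b j / (b (j+1) - b j) := by
  intro j
  have hg := Gpos b hstep hbnn j
  have h1 := hstep j
  have hb := hbnn j
  have : b j / (b (j+1) - b j) ≤ 1 := by
    rw [div_le_one hg]; linarith
  linarith

omit hstep hbnn in
lemma L_eq (j : ℕ) (x : ℝ) :
    (j : ℝ) + (x - b j) / (b (j + 1) - b j)
      = ((j:ℝ) - b j / (b (j+1) - b j)) + x / (b (j+1) - b j) := by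
  rw [sub_div]; ring

include hb0 in
lemma L_nonneg (j : ℕ) {x : ℝ} (hx : 0 ≤ x) :
    0 ≤ (j : ℝ) + (x - b j) / (b (j + 1) - b j) := by
  rw [L_eq]
  have h1 := c_nonneg b hb0 hstep hbnn j
  have h2 := div_nonneg hx (Gpos b hstep hbnn j).le
  linarith

include hb0 in
lemma cfun_bdd {x : ℝ} (hx : 0 ≤ x) :
    BddBelow (Set.range fun j : ℕ => (j : ℝ) + (x - b j) / (b (j + 1) - b j)) :=
  ⟨0, by rintro y ⟨j, rfl⟩; exact L_nonneg b hb0 hstep hbnn j hx⟩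

include hb0 in
lemma cfun_le (j : ℕ) {x : ℝ} (hx : 0 ≤ x) :
    cfun b x ≤ (j : ℝ) + (x - b j) / (b (j + 1) - b j) :=
  ciInf_le (cfun_bdd b hb0 hstep hbnn hx) j

include hb0 in
lemma cfun_nonneg {x : ℝ} (hx : 0 ≤ x) : 0 ≤ cfun b x :=
  le_ciInf fun j => L_nonneg b hb0 hstep hbnn j hx

include hb0 in
lemma cfun_mono {x y : ℝ} (hx : 0 ≤ x) (hxy : x ≤ y) : cfun b x ≤ cfun b y := by
  apply le_ciInf
  intro j
  refine (cfun_le b hb0 hstep hbnn j hx).trans ?_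
  have hg := Gpos b hstep hbnn j
  gcongr

include hb0 in
lemma cfun_zero : cfun b 0 = 0 := by
  have h1 : cfun b 0 ≤ 0 := by
    have := cfun_le b hb0 hstep hbnn 0 (le_refl (0:ℝ))
    simpa [hb0] using this
  exact le_antisymm h1 (cfun_nonneg b hb0 hstep hbnn le_rfl)

include hb0 in
lemma cfun_le_lin {x : ℝ} (hx : 0 ≤ x) : cfun b x ≤ x / (b 1 - b 0) := by
  have := cfun_le b hb0 hstep hbnn 0 hx
  simpa [hb0] using this

include hb0 in
lemma cfun_lb {x : ℝ} (hx : 0 ≤ x) : min 1 (x / (b 2 - b 1)) ≤ cfun b x := by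
  apply le_ciInf
  intro j
  rw [L_eq]
  have hg := Gpos b hstep hbnn j
  have hg1 := Gpos b hstep hbnn 1
  have hc := c_nonneg b hb0 hstep hbnn j
  have hcg := c_ge b hstep hbnn j
  have hdn : 0 ≤ x / (b (j+1) - b j) := div_nonneg hx hg.le
  match j with
  | 0 =>
    have hm : (b 1 - b 0) ≤ (b 2 - b 1) := Gmono b hstep hbnn (by norm_num)
    have h1 : x / (b 2 - b 1) ≤ x / (b (0+1) - b 0) :=
      div_le_div_of_nonneg_left hx (Gpos b hstep hbnn 0) hm
    have h0 : ((0:ℕ):ℝ) - b 0 / (b (0+1) - b 0) = 0 := by simp [hb0]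
    calc min 1 (x / (b 2 - b 1)) ≤ x / (b 2 - b 1) := min_le_right _ _
    _ ≤ x / (b (0+1) - b 0) := h1
    _ ≤ _ := by rw [h0]; linarith
  | 1 =>
    calc min 1 (x / (b 2 - b 1)) ≤ x / (b 2 - b 1) := min_le_right _ _
    _ ≤ _ := by
        have : (0:ℝ) ≤ ((1:ℕ):ℝ) - b 1 / (b (1+1) - b 1) := c_nonneg b hb0 hstep hbnn 1
        push_cast at this ⊢
        linarith
  | (n+2) =>
    calc min 1 (x / (b 2 - b 1)) ≤ 1 := min_le_left _ _
    _ ≤ _ := by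
        push_cast at hcg ⊢
        linarith

include hb0 in
lemma cfun_ratio {x z : ℝ} (hx : 0 < x) (hxz : x ≤ z) :
    x * cfun b z ≤ z * cfun b x := by
  have hz : 0 < z := hx.trans_le hxz
  have key : (x / z) * cfun b z ≤ cfun b x := by
    apply le_ciInf
    intro j
    have hg := Gpos b hstep hbnn j
    have hc := c_nonneg b hb0 hstep hbnn j
    have h1 : (x / z) * cfun b z ≤ (x / z) * ((j:ℝ) + (z - b j) / (b (j+1) - b j)) := by
      apply mul_le_mul_of_nonneg_left (cfun_le b hb0 hstep hbnn j hz.le)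
      positivity
    refine h1.trans ?_
    rw [L_eq, L_eq]
    have hxz1 : x / z ≤ 1 := div_le_one_of_le₀ hxz hz.le
    have hexp : (x / z) * (z / (b (j+1) - b j)) = x / (b (j+1) - b j) := by
      field_simp
    rw [mul_add, hexp]
    have : (x / z) * ((j:ℝ) - b j / (b (j+1) - b j)) ≤ ((j:ℝ) - b j / (b (j+1) - b j)) := by
      nlinarith [div_nonneg hx.le hz.le]
    linarith
  have heq : x * cfun b z = z * ((x / z) * cfun b z) := by
    field_simp
  rw [heq]
  exact mul_le_mul_of_nonneg_left key hz.le

include hb0 in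
lemma cfun_subadd {x y : ℝ} (hx : 0 ≤ x) (hy : 0 ≤ y) :
    cfun b (x + y) ≤ cfun b x + cfun b y := by
  rcases hx.eq_or_lt with rfl | hx'
  · rw [cfun_zero b hb0 hstep hbnn, zero_add, zero_add]
  rcases hy.eq_or_lt with rfl | hy'
  · rw [cfun_zero b hb0 hstep hbnn, add_zero, add_zero]
  have h1 := cfun_ratio b hb0 hstep hbnn hx' (by linarith : x ≤ x + y)
  have h2 := cfun_ratio b hb0 hstep hbnn hy' (by linarith : y ≤ x + y)
  have hxy : 0 < x + y := by linarith
  nlinarith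

include hb0 in
lemma cfun_lb_at (J : ℕ) : (J : ℝ) ≤ cfun b (b J) := by
  apply le_ciInf
  intro j
  rw [L_eq]
  have hg := Gpos b hstep hbnn j
  have hc := c_nonneg b hb0 hstep hbnn j
  have hcg := c_ge b hstep hbnn j
  rcases le_or_gt j J with hjJ | hjJ
  · have := bgap b hstep hbnn j (J - j)
    have hadd : j + (J - j) = J := by omega
    rw [hadd] at this
    have h2 : ((J:ℝ) - j) * (b (j+1) - b j) ≤ b J - b j := by
      have : ((J - j : ℕ):ℝ) = (J:ℝ) - j := by
        push_cast [Nat.cast_sub hjJ]; ring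
      linarith [this ▸ ‹((J - j:ℕ):ℝ) * (b (j+1) - b j) ≤ b J - b j›]
    have h3 : (J:ℝ) - j ≤ (b J - b j) / (b (j+1) - b j) := by
      rw [le_div_iff₀ hg]; linarith
    have h4 : b J / (b (j+1) - b j) - b j / (b (j+1) - b j) = (b J - b j) / (b (j+1) - b j) := by
      rw [div_sub_div_same]
    linarith [div_nonneg (hbnn J) hg.le,
      (by linarith [h4, h3] : (J:ℝ) - j ≤ b J / (b (j+1) - b j) - b j / (b (j+1) - b j))]
  · have hJj : (J:ℝ) ≤ (j:ℝ) - 1 := by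
      have hj1 : J + 1 ≤ j := hjJ
      have : ((J+1:ℕ):ℝ) ≤ (j:ℝ) := by exact_mod_cast hj1
      push_cast at this
      linarith
    have hdiv : 0 ≤ b J / (b (j+1) - b j) := div_nonneg (hbnn J) hg.le
    linarith

include hb0 in
lemma cfun_ub_at (J : ℕ) : cfun b (b J) ≤ (J : ℝ) := by
  have := cfun_le b hb0 hstep hbnn J (hbnn J)
  simpa using this

include hb0 in
lemma cfun_unbounded_modulus : IsUnboundedModulus (cfun b) := by
  refine ⟨⟨fun x hx => cfun_nonneg b hb0 hstep hbnn hx, fun x hx => ?_,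
    fun x hx y hy => cfun_subadd b hb0 hstep hbnn hx hy,
    fun x y hx hxy => cfun_mono b hb0 hstep hbnn hx hxy, ?_⟩, ?_⟩
  · constructor
    · intro hfx
      by_contra hx0
      have hx' : 0 < x := lt_of_le_of_ne hx (Ne.symm hx0)
      have hlb := cfun_lb b hb0 hstep hbnn hx
      rw [hfx] at hlb
      have hg1 := Gpos b hstep hbnn 1
      have : 0 < min 1 (x / (b 2 - b 1)) := lt_min one_pos (div_pos hx' hg1)
      linarith
    · rintro rfl
      exact cfun_zero b hb0 hstep hbnn
  · have h0 : cfun b 0 = 0 := cfun_zero b hb0 hstep hbnn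
    unfold ContinuousWithinAt
    rw [h0]
    apply squeeze_zero' (g := fun x => x / (b 1 - b 0))
    · exact eventually_mem_nhdsWithin.mono fun x hx => cfun_nonneg b hb0 hstep hbnn hx
    · exact eventually_mem_nhdsWithin.mono fun x hx => cfun_le_lin b hb0 hstep hbnn hx
    · have : Tendsto (fun x : ℝ => x / (b 1 - b 0)) (nhds 0) (nhds (0 / (b 1 - b 0))) :=
        (tendsto_id.div_const _)
      rw [zero_div] at this
      exact this.mono_left nhdsWithin_le_nhds
  · intro M
    refine ⟨b (⌈M⌉₊ + 1), hbnn _, ?_⟩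
    have h1 : M < ((⌈M⌉₊ + 1 : ℕ) : ℝ) := by
      have := Nat.le_ceil M
      push_cast
      linarith
    exact h1.trans_le (cfun_lb_at b hb0 hstep hbnn _)

end
end Concave

section Bseq
variable (p : ℕ → Prop)

noncomputable def bseq : ℕ → ℕ
  | 0 => 0
  | j + 1 => max (2 * bseq j + 1) (Nat.nth p (bseq j))

lemma bseq_zero : bseq p 0 = 0 := rfl

lemma bseq_succ_ge (j : ℕ) : 2 * bseq p j + 1 ≤ bseq p (j + 1) := le_max_left _ _

lemma bseq_succ_ge_nth (j : ℕ) : Nat.nth p (bseq p j) ≤ bseq p (j + 1) := le_max_right _ _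

lemma bseq_ge (j : ℕ) : j ≤ bseq p j := by
  induction j with
  | zero => simp
  | succ n ih =>
    have := bseq_succ_ge p n
    omega

lemma bseq_hb0 : ((bseq p 0 : ℕ) : ℝ) = 0 := by simp [bseq_zero]

lemma bseq_hstep (j : ℕ) :
    ((bseq p j : ℕ) : ℝ) + 1 ≤ ((bseq p (j+1) : ℕ) : ℝ) - ((bseq p j : ℕ) : ℝ) := by
  have := bseq_succ_ge p j
  have h : (((2 * bseq p j + 1 : ℕ)) : ℝ) ≤ ((bseq p (j+1) : ℕ) : ℝ) := by exact_mod_cast this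
  push_cast at h
  linarith

lemma bseq_hbnn (j : ℕ) : (0:ℝ) ≤ ((bseq p j : ℕ) : ℝ) := Nat.cast_nonneg _

end Bseq

section ModLemmas

lemma modulus_pos {f : ℝ → ℝ} (hf : IsModulus f) {x : ℝ} (hx : 0 < x) : 0 < f x := by
  rcases hf with ⟨h1, h2, -, -, -⟩
  have := h1 x hx.le
  rcases this.eq_or_lt with heq | hlt
  · exact absurd ((h2 x hx.le).mp heq.symm) hx.ne'
  · exact hlt

lemma modulus_nsmul_s17 {f : ℝ → ℝ} (hf : IsModulus f) (k : ℕ) {x : ℝ} (hx : 0 ≤ x) :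
    f ((k : ℝ) * x) ≤ (k : ℝ) * f x := by
  induction k with
  | zero =>
    simp only [Nat.cast_zero, zero_mul]
    have := (hf.2.1 0 le_rfl).mpr rfl
    simp [this]
  | succ n ih =>
    have hsum : ((n+1 : ℕ) : ℝ) * x = (n : ℝ) * x + x := by push_cast; ring
    rw [hsum]
    have := hf.2.2.1 ((n:ℝ)*x) (by positivity) x hx
    push_cast
    linarith

lemma modulus_tendsto_atTop {f : ℝ → ℝ} (hf : IsUnboundedModulus f) :
    Tendsto (fun u : ℕ => f u) atTop atTop := by
  rw [tendsto_atTop_atTop]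
  intro M
  obtain ⟨x₀, hx₀, hMx⟩ := hf.2 M
  refine ⟨⌈x₀⌉₊, fun u hu => ?_⟩
  have h1 : x₀ ≤ (u : ℝ) := (Nat.le_ceil x₀).trans (by exact_mod_cast hu)
  exact hMx.le.trans (hf.1.2.2.2.1 x₀ u hx₀ h1)

lemma id_unbounded_modulus : IsUnboundedModulus (fun x : ℝ => x) := by
  refine ⟨⟨fun x hx => hx, fun x hx => ⟨id, id⟩, fun x hx y hy => le_rfl,
    fun x y hx hxy => hxy, ?_⟩, fun M => ⟨max M 0 + 1, by positivity, by simp only; linarith [le_max_left M 0]⟩⟩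
  exact continuousWithinAt_id

end ModLemmas

lemma modulus_density {f : ℝ → ℝ} (hf : IsModulus f) (c : ℕ → ℕ) (hc : ∀ u, c u ≤ u)
    (h : Tendsto (fun u : ℕ => f (c u) / f u) atTop (nhds 0)) :
    Tendsto (fun u : ℕ => (c u : ℝ) / u) atTop (nhds 0) := by
  rw [Metric.tendsto_atTop]
  intro ε hε
  set k : ℕ := ⌈ε⁻¹⌉₊ with hk
  have hk0 : 0 < (k : ℝ) := by
    have : 0 < ε⁻¹ := by positivity
    have := Nat.le_ceil ε⁻¹
    rw [← hk] at this
    linarith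
  have hinvk : 0 < (k : ℝ)⁻¹ := by positivity
  obtain ⟨N, hN⟩ := (Metric.tendsto_atTop.mp h) ((k:ℝ)⁻¹) hinvk
  refine ⟨max N 1, fun u hu => ?_⟩
  have hu1 : 1 ≤ u := le_trans (le_max_right N 1) hu
  have huN : N ≤ u := le_trans (le_max_left N 1) hu
  have hupos : (0:ℝ) < u := by exact_mod_cast hu1
  have hfu : 0 < f u := modulus_pos hf hupos
  rw [Real.dist_eq, sub_zero, abs_of_nonneg (by positivity)]
  by_contra hcon
  push_neg at hcon
  -- ε ≤ c u / u
  have hcu : ε * u ≤ (c u : ℝ) := by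
    have := (div_le_div_iff_of_pos_right hupos).mpr hcon
    calc ε * u ≤ (↑(c u) / ↑u) * u := by
          apply mul_le_mul_of_nonneg_right hcon hupos.le
    _ = (c u : ℝ) := by field_simp
  have hcupos : 0 < (c u : ℝ) := lt_of_lt_of_le (by positivity) hcu
  have hfcu : 0 < f (c u) := modulus_pos hf hcupos
  -- u ≤ k * c u
  have hukc : (u : ℝ) ≤ (k : ℝ) * (c u) := by
    have h1 : (u:ℝ) = ε⁻¹ * (ε * u) := by field_simp
    have h2 : ε⁻¹ * (ε * u) ≤ ε⁻¹ * (c u) := by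
      apply mul_le_mul_of_nonneg_left hcu (by positivity)
    have h3 : ε⁻¹ * (c u : ℝ) ≤ (k:ℝ) * (c u) := by
      apply mul_le_mul_of_nonneg_right (Nat.le_ceil ε⁻¹) (by positivity)
    linarith
  have hfle : f u ≤ (k : ℝ) * f (c u) := by
    have h1 : f u ≤ f ((k:ℝ) * c u) := hf.2.2.2.1 u ((k:ℝ) * c u) hupos.le hukc
    exact h1.trans (modulus_nsmul_s17 hf k (by positivity))
  have hge : (k:ℝ)⁻¹ ≤ f (c u) / f u := by
    rw [le_div_iff₀ hfu, inv_mul_le_iff₀ hk0]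
    linarith
  have := hN u huN
  rw [Real.dist_eq, sub_zero, abs_of_nonneg (by positivity)] at this
  linarith


lemma id_stat_unique {X : Type*} [NormedAddCommGroup X] (xs : ℕ → X) (L1 L2 : X)
    (h1 : ∀ ξ : ℝ, 0 < ξ → Tendsto (fun u : ℕ =>
      ((((Finset.Icc 1 u).filter (fun t => ξ ≤ ‖xs t - L1‖)).card : ℝ)) / u) atTop (nhds 0))
    (h2 : ∀ ξ : ℝ, 0 < ξ → Tendsto (fun u : ℕ =>
      ((((Finset.Icc 1 u).filter (fun t => ξ ≤ ‖xs t - L2‖)).card : ℝ)) / u) atTop (nhds 0)) :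
    L1 = L2 := by
  by_contra hne
  set ξ : ℝ := ‖L1 - L2‖ / 2 with hξdef
  have hξ : 0 < ξ := by
    have : 0 < ‖L1 - L2‖ := by
      rw [norm_pos_iff, sub_ne_zero]
      exact hne
    positivity
  have hcover : ∀ t : ℕ, ξ ≤ ‖xs t - L1‖ ∨ ξ ≤ ‖xs t - L2‖ := by
    intro t
    by_contra hcon
    push_neg at hcon
    have htri : ‖L1 - L2‖ ≤ ‖xs t - L1‖ + ‖xs t - L2‖ := by
      have : L1 - L2 = (xs t - L2) - (xs t - L1) := by abel
      rw [this]
      exact (norm_sub_le _ _).trans (by rw [add_comm])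
    rw [hξdef] at hcon
    obtain ⟨hc1, hc2⟩ := hcon
    linarith
  have hsum := (h1 ξ hξ).add (h2 ξ hξ)
  rw [add_zero] at hsum
  have hev : ∀ᶠ u : ℕ in atTop, (1:ℝ) ≤
      ((((Finset.Icc 1 u).filter (fun t => ξ ≤ ‖xs t - L1‖)).card : ℝ)) / u +
      ((((Finset.Icc 1 u).filter (fun t => ξ ≤ ‖xs t - L2‖)).card : ℝ)) / u := by
    filter_upwards [eventually_ge_atTop 1] with u hu
    have hupos : (0:ℝ) < u := by exact_mod_cast hu
    have hsub : Finset.Icc 1 u ⊆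
        ((Finset.Icc 1 u).filter (fun t => ξ ≤ ‖xs t - L1‖)) ∪
        ((Finset.Icc 1 u).filter (fun t => ξ ≤ ‖xs t - L2‖)) := by
      intro t ht
      rcases hcover t with hc | hc
      · exact Finset.mem_union_left _ (Finset.mem_filter.mpr ⟨ht, hc⟩)
      · exact Finset.mem_union_right _ (Finset.mem_filter.mpr ⟨ht, hc⟩)
    have hcard : u ≤ ((Finset.Icc 1 u).filter (fun t => ξ ≤ ‖xs t - L1‖)).card +
        ((Finset.Icc 1 u).filter (fun t => ξ ≤ ‖xs t - L2‖)).card := by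
      calc u = (Finset.Icc 1 u).card := by rw [Nat.card_Icc]; omega
      _ ≤ _ := le_trans (Finset.card_le_card hsub) (Finset.card_union_le _ _)
    have hcardR : (u:ℝ) ≤ (((Finset.Icc 1 u).filter (fun t => ξ ≤ ‖xs t - L1‖)).card : ℝ) +
        (((Finset.Icc 1 u).filter (fun t => ξ ≤ ‖xs t - L2‖)).card : ℝ) := by
      exact_mod_cast hcard
    rw [← add_div, le_div_iff₀ hupos, one_mul]
    exact hcardR
  have hlt := hsum.eventually (eventually_lt_nhds (by norm_num : (0:ℝ) < 1))
  obtain ⟨u, hu1, hu2⟩ := (hev.and hlt).exists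
  linarith

lemma fstat_of_tendsto {X : Type*} [NormedAddCommGroup X] {f : ℝ → ℝ}
    (hf : IsUnboundedModulus f) {xs : ℕ → X} {L : X}
    (hx : Tendsto xs atTop (nhds L)) : FStatConv f xs L := by
  intro ξ hξ
  obtain ⟨T, hT⟩ := (Metric.tendsto_atTop.mp hx) ξ hξ
  have hcard : ∀ u : ℕ, ((Finset.Icc 1 u).filter (fun t => ξ ≤ ‖xs t - L‖)).card ≤ T := by
    intro u
    have hsub : ((Finset.Icc 1 u).filter (fun t => ξ ≤ ‖xs t - L‖)) ⊆ Finset.range T := by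
      intro t ht
      rw [Finset.mem_filter] at ht
      rw [Finset.mem_range]
      by_contra hge
      push_neg at hge
      have := hT t hge
      rw [dist_eq_norm] at this
      linarith [ht.2]
    calc _ ≤ (Finset.range T).card := Finset.card_le_card hsub
    _ = T := Finset.card_range T
  have hmod := hf.1
  apply squeeze_zero' (g := fun u : ℕ => f T / f u)
  · filter_upwards [eventually_ge_atTop 1] with u hu
    have hupos : (0:ℝ) ≤ u := by positivity
    exact div_nonneg (hmod.1 _ (by positivity)) (hmod.1 _ hupos)
  · filter_upwards [eventually_ge_atTop 1] with u hu
    have hupos : (0:ℝ) < u := by exact_mod_cast hu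
    have hfu : 0 < f u := modulus_pos hmod hupos
    have hTpos : ((((Finset.Icc 1 u).filter (fun t => ξ ≤ ‖xs t - L‖)).card : ℝ)) ≤ (T:ℝ) := by
      exact_mod_cast hcard u
    have hfTle : f (((Finset.Icc 1 u).filter (fun t => ξ ≤ ‖xs t - L‖)).card) ≤ f T :=
      hmod.2.2.2.1 _ _ (by positivity) hTpos
    exact div_le_div_of_nonneg_right hfTle hfu.le
  · exact tendsto_const_nhds.div_atTop (modulus_tendsto_atTop hf)

lemma bseq_count (p : ℕ → Prop) (hp : (setOf p).Infinite) (J : ℕ) :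
    bseq p J ≤ ((Finset.Icc 1 (bseq p (J+1))).filter (fun t => p t)).card := by
  have hmono := Nat.nth_strictMono hp
  have key : ∀ i ∈ Finset.Icc 1 (bseq p J),
      Nat.nth p i ∈ (Finset.Icc 1 (bseq p (J+1))).filter (fun t => p t) := by
    intro i hi
    rw [Finset.mem_Icc] at hi
    rw [Finset.mem_filter, Finset.mem_Icc]
    refine ⟨⟨?_, ?_⟩, Nat.nth_mem_of_infinite hp i⟩
    · exact le_trans hi.1 hmono.le_apply
    · exact le_trans (hmono.monotone hi.2) (bseq_succ_ge_nth p J)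
  calc bseq p J = (Finset.Icc 1 (bseq p J)).card := by rw [Nat.card_Icc]; omega
  _ ≤ _ := Finset.card_le_card_of_injOn (fun i => Nat.nth p i) key
      (fun a _ b _ hab => hmono.injective hab)

theorem stmt17 {X : Type*} [NormedAddCommGroup X] [NormedSpace ℝ X]
    (xs : ℕ → X)
    (h : ∀ f : ℝ → ℝ, IsUnboundedModulus f → ∃ L : X, FStatConv f xs L) :
    ∃ x : X, (∀ f : ℝ → ℝ, IsUnboundedModulus f → FStatConv f xs x) ∧
      Tendsto xs atTop (nhds x) := by
  obtain ⟨L, hL⟩ := h (fun x => x) id_unbounded_modulus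
  have hLid : ∀ ξ : ℝ, 0 < ξ → Tendsto (fun u : ℕ =>
      ((((Finset.Icc 1 u).filter (fun t => ξ ≤ ‖xs t - L‖)).card : ℝ)) / u) atTop (nhds 0) :=
    fun ξ hξ => hL ξ hξ
  have key : Tendsto xs atTop (nhds L) := by
    by_contra hnot
    rw [Metric.tendsto_atTop] at hnot
    push_neg at hnot
    obtain ⟨ε, hε, hfreq⟩ := hnot
    have hp : (setOf (fun t => ε ≤ ‖xs t - L‖)).Infinite := by
      apply Set.infinite_of_not_bddAbove
      rintro ⟨B, hB⟩
      obtain ⟨n, hn1, hn2⟩ := hfreq (B+1)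
      rw [dist_eq_norm] at hn2
      have : n ≤ B := hB hn2
      omega
    set b : ℕ → ℝ := fun j => ((bseq (fun t => ε ≤ ‖xs t - L‖) j : ℕ) : ℝ) with hbdef
    have hb0 : b 0 = 0 := bseq_hb0 _
    have hstep : ∀ j, b j + 1 ≤ b (j+1) - b j := bseq_hstep _
    have hbnn : ∀ j, 0 ≤ b j := bseq_hbnn _
    have hfm : IsUnboundedModulus (cfun b) := cfun_unbounded_modulus b hb0 hstep hbnn
    obtain ⟨L', hL'⟩ := h (cfun b) hfm
    have hL'id : ∀ ξ : ℝ, 0 < ξ → Tendsto (fun u : ℕ =>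
        ((((Finset.Icc 1 u).filter (fun t => ξ ≤ ‖xs t - L'‖)).card : ℝ)) / u) atTop (nhds 0) := by
      intro ξ hξ
      apply modulus_density hfm.1 _ (fun u => ?_) (hL' ξ hξ)
      calc ((Finset.Icc 1 u).filter (fun t => ξ ≤ ‖xs t - L'‖)).card
          ≤ (Finset.Icc 1 u).card := Finset.card_filter_le _ _
      _ = u := by rw [Nat.card_Icc]; omega
    have hLL : L' = L := id_stat_unique xs L' L hL'id hLid
    rw [hLL] at hL'
    have hc := hL' ε hε
    obtain ⟨N, hN⟩ := (Metric.tendsto_atTop.mp hc) (1/2) (by norm_num)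
    set J : ℕ := max 1 N with hJdef
    set u : ℕ := bseq (fun t => ε ≤ ‖xs t - L‖) (J+1) with hudef
    have huJ : J + 1 ≤ u := bseq_ge _ (J+1)
    have huN : N ≤ u := by
      have : N ≤ J := le_max_right 1 N
      omega
    have hd := hN u huN
    rw [Real.dist_eq, sub_zero] at hd
    have hcount : bseq (fun t => ε ≤ ‖xs t - L‖) J ≤
        ((Finset.Icc 1 u).filter (fun t => ε ≤ ‖xs t - L‖)).card := bseq_count _ hp J
    have hcountR : b J ≤ ((((Finset.Icc 1 u).filter (fun t => ε ≤ ‖xs t - L‖)).card : ℕ) : ℝ) := by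
      simp only [hbdef]
      exact_mod_cast hcount
    have h1 : (J:ℝ) ≤ cfun b (((Finset.Icc 1 u).filter (fun t => ε ≤ ‖xs t - L‖)).card) :=
      le_trans (cfun_lb_at b hb0 hstep hbnn J)
        (cfun_mono b hb0 hstep hbnn (hbnn J) hcountR)
    have hub : (u:ℝ) = b (J+1) := rfl
    have h2 : cfun b u ≤ (J:ℝ) + 1 := by
      rw [hub]
      have := cfun_ub_at b hb0 hstep hbnn (J+1)
      push_cast at this
      linarith
    have hfu : 0 < cfun b u := by
      rw [hub]
      have := cfun_lb_at b hb0 hstep hbnn (J+1)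
      have : (0:ℝ) < (J:ℝ)+1 := by positivity
      calc (0:ℝ) < (J:ℝ)+1 := this
      _ ≤ cfun b (b (J+1)) := by
          have := cfun_lb_at b hb0 hstep hbnn (J+1)
          push_cast at this
          linarith
    have hJ1 : (1:ℝ) ≤ (J:ℝ) := by
      have : 1 ≤ J := le_max_left 1 N
      exact_mod_cast this
    have hratio : (1:ℝ)/2 ≤ cfun b (((Finset.Icc 1 u).filter (fun t => ε ≤ ‖xs t - L‖)).card) / cfun b u := by
      calc (1:ℝ)/2 ≤ (J:ℝ)/((J:ℝ)+1) := by
            rw [div_le_div_iff₀ (by norm_num) (by positivity)]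
            linarith
      _ ≤ _ := div_le_div₀ (le_trans (by positivity) h1) h1 hfu h2
    rw [abs_lt] at hd
    linarith [hd.2]
  exact ⟨L, fun f hf => fstat_of_tendsto hf key, key⟩
end

section
/- Let f be an unbounded modulus with lim_{u→∞} f(u)/u > 0 and λ ∈ Λ with lim_n f(n)/f(λ_n) existing and positive. Then every f_λ-statistically convergent real sequence is statistically convergent (with respect to natural density) to the same limit. -/
open Filter Finset Topology
open scoped Classical

theorem stmt18 (f : ℝ → ℝ) (hf : IsUnboundedModulus f)
    (hlim : ∃ p : ℝ, 0 < p ∧ Tendsto (fun u : ℝ => f u / u) atTop (nhds p))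
    (l : ℕ → ℝ) (hl : MemLambda l)
    (hq : ∃ q : ℝ, 0 < q ∧ Tendsto (fun n : ℕ => f (n : ℝ) / f (l n)) atTop (nhds q))
    (x : ℕ → ℝ) (L : ℝ) (hconv : FLStatConv f l x L) :
    ∀ ξ : ℝ, 0 < ξ →
      Tendsto (fun n => (((Finset.Icc 1 n).filter (fun t => ξ ≤ |x t - L|)).card : ℝ) / (n : ℝ))
        atTop (nhds 0) := by
  obtain ⟨p, hp, hfp⟩ := hlim
  obtain ⟨hl1, hlmono, hlstep, hlpos, hltop⟩ := hl
  -- l n ≤ n for 1 ≤ n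
  have hln : ∀ n : ℕ, 1 ≤ n → l n ≤ (n : ℝ) := by
    intro n hn
    induction n with
    | zero => omega
    | succ k ih =>
      rcases Nat.eq_zero_or_pos k with hk | hk
      · subst hk; simp [hl1]
      · have h1 := hlstep k
        have h2 := ih hk
        push_cast
        linarith
  -- linear band for f
  have hband : ∃ u₀ : ℝ, 1 ≤ u₀ ∧ ∀ u : ℝ, u₀ ≤ u → p / 2 * u ≤ f u ∧ f u ≤ 2 * p * u := by
    have h1 : ∀ᶠ u : ℝ in atTop, f u / u ∈ Set.Ioo (p / 2) (2 * p) :=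
      hfp.eventually (Ioo_mem_nhds (by linarith) (by linarith))
    rw [eventually_atTop] at h1
    obtain ⟨a, ha⟩ := h1
    refine ⟨max a 1, le_max_right _ _, fun u hu => ?_⟩
    have hu0 : (0 : ℝ) < u := lt_of_lt_of_le one_pos (le_trans (le_max_right a 1) hu)
    obtain ⟨h2, h3⟩ := ha u (le_trans (le_max_left a 1) hu)
    exact ⟨le_of_lt ((lt_div_iff₀ hu0).mp h2), le_of_lt ((div_lt_iff₀ hu0).mp h3)⟩
  obtain ⟨u₀, hu₀1, hband⟩ := hband
  intro ξ hξ
  have hK := hconv ξ hξ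
  simp only [Real.norm_eq_abs] at hK
  have hBig : ∀ ε : ℝ, 0 < ε → ∀ᶠ n in atTop,
      ((((Iseg l n).filter (fun t => ξ ≤ |x t - L|)).card : ℝ)) ≤ ε * l n := by
    intro ε hε
    have h1 : ∀ᶠ n in atTop,
        f (((Iseg l n).filter (fun t => ξ ≤ |x t - L|)).card) / f (l n) < ε / 4 :=
      hK.eventually (eventually_lt_nhds (by positivity))
    have h2 : ∀ᶠ n in atTop, u₀ ≤ l n := hltop.eventually (eventually_ge_atTop u₀)
    have h3 : ∀ᶠ n in atTop, u₀ / ε ≤ l n := hltop.eventually (eventually_ge_atTop _)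
    filter_upwards [h1, h2, h3] with n h1 h2 h3
    set KR : ℝ := (((Iseg l n).filter (fun t => ξ ≤ |x t - L|)).card : ℝ) with hKR
    obtain ⟨hb1, hb2⟩ := hband (l n) h2
    have hflpos : 0 < f (l n) := lt_of_lt_of_le (by nlinarith [hlpos n]) hb1
    have hfK : f KR < ε / 4 * f (l n) := (div_lt_iff₀ hflpos).mp h1
    by_cases hcase : u₀ ≤ KR
    · obtain ⟨hc1, hc2⟩ := hband _ hcase
      nlinarith [mul_le_mul_of_nonneg_left hb2 (le_of_lt (show (0:ℝ) < ε/4 by linarith)), hp]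
    · push_neg at hcase
      have hu : u₀ ≤ ε * l n := by
        rw [div_le_iff₀ hε] at h3
        linarith
      linarith
  rw [NormedAddCommGroup.tendsto_nhds_zero]
  intro ε hε
  obtain ⟨N₀, hN₀⟩ := eventually_atTop.mp
    ((hBig (ε / 4) (by positivity)).and (hltop.eventually (eventually_ge_atTop 2)))
  set N : ℕ := N₀ + 1 with hN
  have key : ∀ n : ℕ,
      ((((Finset.Icc 1 n).filter (fun t => ξ ≤ |x t - L|)).card : ℝ)) ≤ N + ε / 2 * n := by
    intro n
    induction n using Nat.strong_induction_on with
    | _ n ih =>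
      by_cases hn : n < N
      · have h1 : ((Finset.Icc 1 n).filter (fun t => ξ ≤ |x t - L|)).card ≤ n :=
          le_trans (Finset.card_filter_le _ _) (by simp)
        have h2 : (n : ℝ) ≤ N := by exact_mod_cast le_of_lt hn
        have h3 : ((((Finset.Icc 1 n).filter (fun t => ξ ≤ |x t - L|)).card : ℝ)) ≤ n := by
          exact_mod_cast h1
        nlinarith [Nat.cast_nonneg (α := ℝ) n]
      · push_neg at hn
        obtain ⟨hKb, h2l⟩ := hN₀ n (by omega)
        have hn1 : 1 ≤ n := by omega
        have hlen : l n ≤ (n : ℝ) := hln n hn1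
        have hfl : ((⌊l n⌋₊ : ℕ) : ℝ) ≤ l n := Nat.floor_le (le_of_lt (hlpos n))
        have hfl1 : l n < (⌊l n⌋₊ : ℝ) + 1 := Nat.lt_floor_add_one _
        have hfl2 : 2 ≤ ⌊l n⌋₊ := Nat.le_floor (by exact_mod_cast h2l)
        have hkn : ⌊l n⌋₊ ≤ n := by
          have := Nat.floor_mono hlen
          simpa using this
        set m := n - ⌊l n⌋₊ with hmdef
        have hmn : m < n := by omega
        have hmR : (m : ℝ) = (n : ℝ) - (⌊l n⌋₊ : ℝ) := by
          rw [hmdef]; exact Nat.cast_sub hkn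
        have hsub : (Finset.Icc 1 n).filter (fun t => ξ ≤ |x t - L|) ⊆
            (Finset.Icc 1 m).filter (fun t => ξ ≤ |x t - L|) ∪
            (Iseg l n).filter (fun t => ξ ≤ |x t - L|) := by
          intro t ht
          simp only [Finset.mem_filter, Finset.mem_Icc] at ht
          obtain ⟨⟨ht1, ht2⟩, htP⟩ := ht
          rw [Finset.mem_union]
          by_cases htm : t ≤ m
          · left; simp only [Finset.mem_filter, Finset.mem_Icc]; exact ⟨⟨ht1, htm⟩, htP⟩
          · right
            push_neg at htm
            have htR : (m : ℝ) + 1 ≤ t := by exact_mod_cast htm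
            simp only [Iseg, Finset.mem_filter, Finset.mem_Icc]
            refine ⟨⟨⟨ht1, ht2⟩, ?_⟩, htP⟩
            rw [hmR] at htR
            linarith
        have hcard : ((((Finset.Icc 1 n).filter (fun t => ξ ≤ |x t - L|)).card : ℝ)) ≤
            ((((Finset.Icc 1 m).filter (fun t => ξ ≤ |x t - L|)).card : ℝ)) +
            ((((Iseg l n).filter (fun t => ξ ≤ |x t - L|)).card : ℝ)) := by
          have hc1 := Finset.card_le_card hsub
          have hc2 := Finset.card_union_le ((Finset.Icc 1 m).filter (fun t => ξ ≤ |x t - L|))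
            ((Iseg l n).filter (fun t => ξ ≤ |x t - L|))
          exact_mod_cast le_trans hc1 hc2
        have ihm := ih m hmn
        have hflR : l n / 2 ≤ (⌊l n⌋₊ : ℝ) := by linarith
        nlinarith [mul_le_mul_of_nonneg_left hflR (show (0:ℝ) ≤ ε / 2 by linarith)]
  have h4 : ∀ᶠ n : ℕ in atTop, (2 * N / ε : ℝ) < n :=
    tendsto_natCast_atTop_atTop.eventually (eventually_gt_atTop _)
  filter_upwards [h4, eventually_ge_atTop 1] with n hn hn1
  have hn0 : (0 : ℝ) < n := by exact_mod_cast hn1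
  rw [Real.norm_eq_abs, abs_of_nonneg (by positivity), div_lt_iff₀ hn0]
  have hNn : (N : ℝ) < ε / 2 * n := by
    rw [div_lt_iff₀ hε] at hn
    linarith
  linarith [key n]
end

section
/- Let f and g be unbounded moduli, X a normed space, and (x_t) a sequence in X. If (x_t) is f-statistically convergent to x and g-statistically convergent to y, then x = y. -/
open Filter Finset Topology
open scoped Classical

lemma modulus_half_aux (f : ℝ → ℝ) (hf : IsModulus f) (u c : ℝ)
    (hu : 1 ≤ u) (hc : 0 ≤ c) (h : u ≤ 2 * c) : 1/2 ≤ f c / f u := by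
  obtain ⟨h0, h1, h2, h3, _⟩ := hf
  have hu0 : (0:ℝ) < u := lt_of_lt_of_le one_pos hu
  have hfu : 0 < f u := by
    rcases lt_or_eq_of_le (h0 u hu0.le) with h' | h'
    · exact h'
    · exact absurd ((h1 u hu0.le).mp h'.symm) (by linarith)
  have hhalf : (0:ℝ) ≤ u/2 := by linarith
  have h4 : f u ≤ 2 * f (u/2) := by
    have := h2 (u/2) hhalf (u/2) hhalf
    rw [add_halves] at this
    linarith
  have h5 : f (u/2) ≤ f c := h3 (u/2) c hhalf (by linarith)
  rw [le_div_iff₀ hfu]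
  linarith

theorem stmt19 {X : Type*} [NormedAddCommGroup X] [NormedSpace ℝ X]
    (f g : ℝ → ℝ) (hf : IsUnboundedModulus f) (hg : IsUnboundedModulus g)
    (xs : ℕ → X) (x y : X)
    (hx : FStatConv f xs x) (hy : FStatConv g xs y) : x = y := by
  by_contra hxy
  have hxy' : 0 < ‖x - y‖ := norm_pos_iff.mpr (sub_ne_zero.mpr hxy)
  set ξ := ‖x - y‖ / 2 with hξdef
  have hξ : 0 < ξ := by positivity
  have hA := (hx ξ hξ).eventually_lt_const (by norm_num : (0:ℝ) < 1/2)
  have hB := (hy ξ hξ).eventually_lt_const (by norm_num : (0:ℝ) < 1/2)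
  obtain ⟨u, ⟨⟨hAu, hBu⟩, hu1⟩⟩ := ((hA.and hB).and (eventually_ge_atTop 1)).exists
  set A := (Finset.Icc 1 u).filter (fun t => ξ ≤ ‖xs t - x‖) with hAdef
  set B := (Finset.Icc 1 u).filter (fun t => ξ ≤ ‖xs t - y‖) with hBdef
  have hsub : Finset.Icc 1 u ⊆ A ∪ B := by
    intro t ht
    rcases le_or_gt ξ ‖xs t - x‖ with h | h
    · exact Finset.mem_union_left _ (Finset.mem_filter.mpr ⟨ht, h⟩)
    · refine Finset.mem_union_right _ (Finset.mem_filter.mpr ⟨ht, ?_⟩)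
      have htri : ‖x - y‖ ≤ ‖xs t - x‖ + ‖xs t - y‖ := by
        calc ‖x - y‖ = ‖(x - xs t) + (xs t - y)‖ := by rw [sub_add_sub_cancel]
          _ ≤ ‖x - xs t‖ + ‖xs t - y‖ := norm_add_le _ _
          _ = ‖xs t - x‖ + ‖xs t - y‖ := by rw [norm_sub_rev]
      have : ‖x - y‖ = 2 * ξ := by rw [hξdef]; ring
      linarith
  have hcard : (u : ℝ) ≤ (A.card : ℝ) + (B.card : ℝ) := by
    have h1 : (Finset.Icc 1 u).card = u := by simp [Nat.card_Icc]
    have h2 : (Finset.Icc 1 u).card ≤ (A ∪ B).card := Finset.card_le_card hsub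
    have h3 : (A ∪ B).card ≤ A.card + B.card := Finset.card_union_le _ _
    rw [h1] at h2
    exact_mod_cast h2.trans h3
  have hu1' : (1:ℝ) ≤ (u:ℝ) := by exact_mod_cast hu1
  rcases le_total ((u:ℝ)) (2 * (A.card : ℝ)) with h | h
  · have := modulus_half_aux f hf.1 (u:ℝ) (A.card : ℝ) hu1' (by positivity) h
    linarith
  · have h' : (u:ℝ) ≤ 2 * (B.card : ℝ) := by linarith
    have := modulus_half_aux g hg.1 (u:ℝ) (B.card : ℝ) hu1' (by positivity) h'
    linarith
end
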